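/- arXiv:math/9710212 — 4 statements merged into one kernel-verified Lean document; each statement's English description precedes it below -/
import Mathlib

section
/- If E is a closed subset of the circle ℝ/ℤ and the map m_d(t) = d·t (mod 1), for an integer d ≥ 2, maps E homeomorphically onto itself, then E is finite. -/
open Set MeasureTheory Topology

noncomputable section

/-- The circle `ℝ/ℤ`. -/
abbrev 𝕊 : Type := AddCircle (1 : ℝ)

/-- Multiplication by `d` modulo `1` on the circle `ℝ/ℤ`. -/
def md (d : ℕ) (t : 𝕊) : 𝕊 := d • t

/-- `A` is unlinked with `B`: `A` is contained in a single connected component of the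
complement of `B` in the circle. -/
def Unlinked (A B : Set 𝕊) : Prop := ∃ x, A ⊆ connectedComponentIn Bᶜ x

lemma rep' (u : 𝕊) : ∃ x : ℝ, (x : 𝕊) = u ∧ |x| = ‖u‖ ∧ |x| ≤ 1/2 := by
  induction u using QuotientAddGroup.induction_on with
  | H x =>
  have h0 : ((round x : ℝ) : 𝕊) = 0 := by
    rw [AddCircle.coe_eq_zero_iff]; exact ⟨round x, by simp⟩
  have hcoe : ((x - round x : ℝ) : 𝕊) = (x : 𝕊) := by
    rw [sub_eq_add_neg, AddCircle.coe_add, AddCircle.coe_neg, h0, neg_zero, add_zero]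
  refine ⟨x - round x, hcoe, ?_, ?_⟩
  · have h2 : |x - round x| ≤ |(1:ℝ)|/2 := by
      rw [abs_one]; have := abs_sub_round x; linarith
    rw [← (AddCircle.norm_coe_eq_abs_iff (1:ℝ) one_ne_zero).mpr h2, hcoe]
  · have := abs_sub_round x; linarith

lemma expand' (d : ℕ) (hd : 1 ≤ d) (u : 𝕊) (hu : ‖u‖ ≤ 1/(2*d)) : ‖d • u‖ = d * ‖u‖ := by
  obtain ⟨x, rfl, hx, hx2⟩ := rep' u
  have hd0 : (0:ℝ) < d := by exact_mod_cast hd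
  have hsm : d • ((x:𝕊)) = ((d * x : ℝ) : 𝕊) := by
    rw [← QuotientAddGroup.mk_nsmul, nsmul_eq_mul]
  rw [hsm, ← hx]
  have hb : |(d:ℝ) * x| ≤ |(1:ℝ)|/2 := by
    rw [abs_one, abs_mul, abs_of_pos hd0]
    rw [← hx] at hu
    calc (d:ℝ) * |x| ≤ (d:ℝ) * (1/(2*d)) := by nlinarith
    _ = 1/2 := by field_simp
  rw [(AddCircle.norm_coe_eq_abs_iff (1:ℝ) one_ne_zero).mpr hb, abs_mul, abs_of_pos hd0]

/-- If `E ⊆ ℝ/ℤ` is closed and `m_d` maps `E` homeomorphically onto itself (d ≥ 2),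
then `E` is finite. -/
theorem douady_lemma (d : ℕ) (hd : 2 ≤ d) (E : Set 𝕊) (hE : IsClosed E)
    (h : ∃ e : E ≃ₜ E, ∀ x : E, (e x : 𝕊) = md d (x : 𝕊)) :
    E.Finite := by
  classical
  obtain ⟨e, he⟩ := h
  have hcomp : IsCompact E := hE.isCompact
  have _inst : CompactSpace ↥E := isCompact_iff_compactSpace.mp hcomp
  have hd0 : (0:ℝ) < d := by positivity
  have hd1 : (1:ℝ) < d := by exact_mod_cast hd.trans_lt' one_lt_two
  have hucont : UniformContinuous (e.symm : E → E) :=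
    CompactSpace.uniformContinuous_of_continuous e.symm.continuous
  obtain ⟨δ0, hδ0, hδc⟩ := Metric.uniformContinuous_iff.mp hucont (1/(2*d)) (by positivity)
  set δ : ℝ := min δ0 (1/(2*d)) with hδdef
  have hδpos : 0 < δ := lt_min hδ0 (by positivity)
  -- Claim A : e.symm contracts by 1/d at scale δ
  have hA : ∀ x y : E, dist x y < δ → dist (e.symm x) (e.symm y) = dist x y / d := by
    intro x y hxy
    have h1 : dist (e.symm x) (e.symm y) < 1/(2*d) := hδc (hxy.trans_le (min_le_left _ _))
    have key : dist x y = d * dist (e.symm x) (e.symm y) := by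
      conv_lhs => rw [← e.apply_symm_apply x, ← e.apply_symm_apply y]
      rw [Subtype.dist_eq, he, he, Subtype.dist_eq (e.symm x) (e.symm y)] at *
      show dist (md d _) (md d _) = _
      unfold md
      rw [dist_eq_norm, dist_eq_norm, ← smul_sub]
      exact expand' d (by omega) _ (by rw [← dist_eq_norm]; exact h1.le)
    rw [key]; field_simp
  -- Claim B : iterated contraction
  have hB : ∀ n : ℕ, ∀ x y : E, dist x y < δ →
      dist ((⇑e.symm)^[n] x) ((⇑e.symm)^[n] y) ≤ dist x y / d ^ n := by
    intro n
    induction n with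
    | zero => intro x y _; simp
    | succ n ih =>
      intro x y hxy
      have h1 := hA x y hxy
      have h2 : dist (e.symm x) (e.symm y) < δ := by
        rw [h1]
        calc dist x y / d < δ / 1 := by
              apply div_lt_div₀ hxy hd1.le (by positivity) one_pos
          _ = δ := by ring
      calc dist ((⇑e.symm)^[n+1] x) ((⇑e.symm)^[n+1] y)
          = dist ((⇑e.symm)^[n] (e.symm x)) ((⇑e.symm)^[n] (e.symm y)) := by
            rw [Function.iterate_succ_apply, Function.iterate_succ_apply]
        _ ≤ dist (e.symm x) (e.symm y) / d ^ n := ih _ _ h2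
        _ = dist x y / d ^ (n+1) := by rw [h1, div_div, ← pow_succ']
  -- totally bounded cover
  obtain ⟨t, htf, htc⟩ := Metric.totallyBounded_iff.mp hcomp.totallyBounded (δ/2) (by positivity)
  by_contra hfin
  have hinf : E.Infinite := hfin
  obtain ⟨F, hFE, hFcard⟩ := hinf.exists_subset_card_eq (htf.toFinset.card + 2)
  -- minimal distance in F
  have hF2 : ∃ a ∈ F, ∃ b ∈ F, a ≠ b := by
    have h1F : 1 < F.card := by omega
    obtain ⟨a, ha, b, hb, hab⟩ := Finset.one_lt_card.mp h1F
    exact ⟨a, ha, b, hb, hab⟩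
  set D : Finset ℝ := ((F ×ˢ F).filter fun p => p.1 ≠ p.2).image fun p => dist p.1 p.2 with hD
  have hDne : D.Nonempty := by
    obtain ⟨a, ha, b, hb, hab⟩ := hF2
    exact ⟨dist a b, Finset.mem_image.mpr ⟨(a, b), by simp [ha, hb, hab], rfl⟩⟩
  set ε : ℝ := D.min' hDne with hε
  have hεle : ∀ a ∈ F, ∀ b ∈ F, a ≠ b → ε ≤ dist a b := by
    intro a ha b hb hab
    exact D.min'_le _ (Finset.mem_image.mpr ⟨(a, b), by simp [ha, hb, hab], rfl⟩)
  have hεpos : 0 < ε := by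
    obtain ⟨r, hr⟩ := Finset.mem_image.mp (D.min'_mem hDne)
    obtain ⟨hmem, hre⟩ := hr
    have := (Finset.mem_filter.mp hmem).2
    rw [hε, ← hre]
    exact dist_pos.mpr this
  -- choose n with δ / d^n < ε
  obtain ⟨n, hn⟩ := exists_pow_lt_of_lt_one (x := ε/δ) (y := 1/(d:ℝ))
    (by positivity) (by rw [div_lt_one hd0]; exact hd1)
  have hδn : δ / d ^ n < ε := by
    have : ((1:ℝ)/d) ^ n = 1 / d ^ n := by rw [one_div, one_div, inv_pow]
    rw [this, div_lt_div_iff₀ (by positivity) hδpos] at hn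
    rw [div_lt_iff₀ (by positivity)]
    linarith [hn]
  -- labeling map
  have hcover : ∀ z : E, ∃ y ∈ htf.toFinset, (z : 𝕊) ∈ Metric.ball y (δ/2) := by
    intro z
    have := htc z.2
    simp only [mem_iUnion, exists_prop] at this
    obtain ⟨y, hy1, hy2⟩ := this
    exact ⟨y, htf.mem_toFinset.mpr hy1, hy2⟩
  choose c hc1 hc2 using hcover
  set f : 𝕊 → 𝕊 := fun x => if hx : x ∈ E then c ((⇑e)^[n] ⟨x, hx⟩) else x with hf
  have hmaps : ∀ a ∈ F, f a ∈ htf.toFinset := by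
    intro a ha
    have haE : a ∈ E := hFE ha
    simp only [hf, dif_pos haE]
    exact hc1 _
  obtain ⟨a, ha, b, hb, hab, hfab⟩ :=
    Finset.exists_ne_map_eq_of_card_lt_of_maps_to (by omega) hmaps
  have haE : a ∈ E := hFE ha
  have hbE : b ∈ E := hFE hb
  simp only [hf, dif_pos haE, dif_pos hbE] at hfab
  set za : E := (⇑e)^[n] ⟨a, haE⟩ with hza
  set zb : E := (⇑e)^[n] ⟨b, hbE⟩ with hzb
  have hdzz : dist za zb < δ := by
    rw [Subtype.dist_eq]
    calc dist (za:𝕊) (zb:𝕊) ≤ dist (za:𝕊) (c za) + dist (c za) (zb:𝕊) := dist_triangle _ _ _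
      _ < δ/2 + δ/2 := by
          apply add_lt_add
          · exact Metric.mem_ball.mp (hc2 za)
          · rw [dist_comm, hfab]; exact Metric.mem_ball.mp (hc2 zb)
      _ = δ := by ring
  have hback := hB n za zb hdzz
  have hid : ∀ z : E, (⇑e.symm)^[n] ((⇑e)^[n] z) = z := by
    intro z
    exact Function.LeftInverse.iterate e.symm_apply_apply n z
  rw [hza, hzb, hid, hid] at hback
  have : dist (⟨a, haE⟩ : E) ⟨b, hbE⟩ < ε := by
    calc dist (⟨a, haE⟩ : E) ⟨b, hbE⟩ ≤ dist za zb / d ^ n := hback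
      _ < δ / d ^ n := by gcongr
      _ < ε := hδn
  rw [Subtype.dist_eq] at this
  exact absurd (hεle a ha b hb hab) (by push_neg; exact this)
end
end

section
/- The relation of being unlinked is symmetric: for subsets A, A' of the circle ℝ/ℤ each with at least two points, if A is contained in a connected component of (ℝ/ℤ) \ A', then A' is contained in a connected component of (ℝ/ℤ) \ A. -/
open Set MeasureTheory Topology

noncomputable section

/-- The unlinked relation is symmetric for disjoint finite subsets of the circle,
each with at least two points. -/
theorem unlinked_symm (A A' : Set 𝕊) (hA : A.Finite) (hA' : A'.Finite)
    (hdisj : Disjoint A A') (h2 : 2 ≤ A.ncard) (h2' : 2 ≤ A'.ncard)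
    (h : Unlinked A A') : Unlinked A' A := by
  haveI : Fact ((0:ℝ) < 1) := ⟨one_pos⟩
  obtain ⟨x, hx⟩ := h
  set C := connectedComponentIn A'ᶜ x with hCdef
  have hAne : A.Nonempty := Set.nonempty_of_ncard_ne_zero (by omega)
  have hA'ne : A'.Nonempty := Set.nonempty_of_ncard_ne_zero (by omega)
  obtain ⟨p, hpA'⟩ := hA'ne
  have hCne : C.Nonempty := hAne.mono hx
  have hCsub : C ⊆ A'ᶜ := connectedComponentIn_subset _ _
  have hCconn : IsConnected C := by
    rw [isConnected_connectedComponentIn_iff]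
    exact connectedComponentIn_nonempty_iff.mp hCne
  have hpC : p ∉ C := fun hp => (hCsub hp) hpA'
  obtain ⟨a, rfl⟩ := QuotientAddGroup.mk_surjective p
  -- the section of the quotient map taking values in `(a, a+1]`
  set g : 𝕊 → ℝ := fun y => ((AddCircle.equivIoc 1 a y : Ioc a (a + 1)) : ℝ) with hgdef
  have hgIoc : ∀ y : 𝕊, g y ∈ Ioc a (a + 1) := fun y => (AddCircle.equivIoc 1 a y).2
  have hgsec : ∀ y : 𝕊, ((g y : ℝ) : 𝕊) = y := fun y =>
    (AddCircle.equivIoc 1 a).symm_apply_apply y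
  have hgval : ∀ t : ℝ, t ∈ Ioc a (a + 1) → g (↑t) = t := by
    intro t ht
    have : (AddCircle.equivIoc 1 a) ((t : ℝ) : 𝕊) = ⟨t, ht⟩ := by
      rw [Equiv.apply_eq_iff_eq_symm_apply]; rfl
    simp [hgdef, this]
  have hgc : ContinuousOn g C := by
    intro y hy
    have hya : y ≠ ((a : ℝ) : 𝕊) := fun hh => hpC (hh ▸ hy)
    exact (continuous_subtype_val.continuousAt.comp
      (AddCircle.continuousAt_equivIoc 1 a hya)).continuousWithinAt
  set W : Set ℝ := g '' C with hWdef
  have hWpre : IsPreconnected W := hCconn.isPreconnected.image g hgc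
  have hWord : W.OrdConnected := hWpre.ordConnected
  have hWC : ∀ t ∈ W, ((t : ℝ) : 𝕊) ∈ C := by
    rintro t ⟨y, hy, rfl⟩; rw [hgsec]; exact hy
  have hcoe1 : (((a + 1 : ℝ)) : 𝕊) = ((a : ℝ) : 𝕊) := AddCircle.coe_add_period 1 a
  have hWIoo : W ⊆ Ioo a (a + 1) := by
    rintro t ⟨y, hy, rfl⟩
    have h1 := hgIoc y
    refine ⟨h1.1, lt_of_le_of_ne h1.2 ?_⟩
    intro hte
    apply hpC
    have : ((g y : ℝ) : 𝕊) = ((a : ℝ) : 𝕊) := by rw [hte]; exact hcoe1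
    rw [hgsec] at this
    rwa [← this]
  have hCW : ∀ t : ℝ, t ∈ Ioc a (a + 1) → ((t : ℝ) : 𝕊) ∈ C → t ∈ W := by
    intro t ht hc
    exact ⟨(t : ℝ), hc, hgval t ht⟩
  -- the two closed arcs forming the complement of C
  set L₁ : Set ℝ := {r | r ∈ Icc a (a + 1) ∧ r ∉ W ∧ ∀ w ∈ W, r ≤ w} with hL1def
  set L₂ : Set ℝ := {r | r ∈ Icc a (a + 1) ∧ r ∉ W ∧ ∀ w ∈ W, w ≤ r} with hL2def
  have hL₁ord : L₁.OrdConnected := by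
    constructor
    rintro u ⟨hu1, hu2, hu3⟩ v ⟨hv1, hv2, hv3⟩ z hz
    refine ⟨⟨hu1.1.trans hz.1, hz.2.trans hv1.2⟩, ?_, fun w hw => hz.2.trans (hv3 w hw)⟩
    intro hzW
    exact hv2 (le_antisymm (hv3 z hzW) hz.2 ▸ hzW)
  have hL₂ord : L₂.OrdConnected := by
    constructor
    rintro u ⟨hu1, hu2, hu3⟩ v ⟨hv1, hv2, hv3⟩ z hz
    refine ⟨⟨hu1.1.trans hz.1, hz.2.trans hv1.2⟩, ?_, fun w hw => (hu3 w hw).trans hz.1⟩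
    intro hzW
    exact hu2 (le_antisymm hz.1 (hu3 z hzW) ▸ hzW)
  have haL₁ : a ∈ L₁ := by
    refine ⟨⟨le_refl _, by linarith⟩, fun hW => (hWIoo hW).1.false, fun w hw => (hWIoo hw).1.le⟩
  have ha1L₂ : (a + 1) ∈ L₂ := by
    refine ⟨⟨by linarith, le_refl _⟩, fun hW => (hWIoo hW).2.false, fun w hw => (hWIoo hw).2.le⟩
  have hπ : Continuous ((↑·) : ℝ → 𝕊) := AddCircle.continuous_mk' 1
  have hK1 : IsPreconnected (((↑·) : ℝ → 𝕊) '' L₁) :=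
    hL₁ord.isPreconnected.image _ hπ.continuousOn
  have hK2 : IsPreconnected (((↑·) : ℝ → 𝕊) '' L₂) :=
    hL₂ord.isPreconnected.image _ hπ.continuousOn
  set K : Set 𝕊 := (((↑·) : ℝ → 𝕊) '' L₁) ∪ (((↑·) : ℝ → 𝕊) '' L₂) with hKdef
  have hKpre : IsPreconnected K :=
    IsPreconnected.union (((a : ℝ) : 𝕊)) ⟨a, haL₁, rfl⟩ ⟨a + 1, ha1L₂, hcoe1⟩ hK1 hK2
  -- K = Cᶜ
  have hKC : K = Cᶜ := by
    apply Set.eq_of_subset_of_subset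
    · rintro y (⟨r, ⟨hr1, hr2, _⟩, rfl⟩ | ⟨r, ⟨hr1, hr2, _⟩, rfl⟩) <;>
      · intro hrc
        rcases eq_or_lt_of_le hr1.1 with h1 | h1
        · exact hpC (h1 ▸ hrc)
        rcases eq_or_lt_of_le hr1.2 with h2 | h2
        · apply hpC
          have h3 : ((a + 1 : ℝ) : 𝕊) ∈ C := by simpa [h2] using hrc
          rwa [hcoe1] at h3
        exact hr2 (hCW r ⟨h1, h2.le⟩ hrc)
    · intro y hy
      by_cases hyp : y = ((a : ℝ) : 𝕊)
      · exact Or.inl ⟨a, haL₁, hyp.symm⟩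
      set t := g y with htdef
      have hty : ((t : ℝ) : 𝕊) = y := hgsec y
      have htIoc := hgIoc y
      have htW : t ∉ W := fun hW => hy (hty ▸ hWC t hW)
      have htIcc : t ∈ Icc a (a + 1) := ⟨htIoc.1.le, htIoc.2⟩
      by_cases hlow : ∀ w ∈ W, t ≤ w
      · exact Or.inl ⟨t, ⟨htIcc, htW, hlow⟩, hty⟩
      · push_neg at hlow
        obtain ⟨w₁, hw₁, hw₁t⟩ := hlow
        refine Or.inr ⟨t, ⟨htIcc, htW, fun w hw => ?_⟩, hty⟩
        by_contra hwt
        push_neg at hwt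
        exact htW (hWord.out hw₁ hw ⟨hw₁t.le, hwt.le⟩)
  -- conclude
  refine ⟨((a : ℝ) : 𝕊), fun y hy => ?_⟩
  have hCcA : Cᶜ ⊆ Aᶜ := Set.compl_subset_compl.mpr hx
  have hA'Cc : A' ⊆ Cᶜ := fun z hz hzC => (hCsub hzC) hz
  have := hKpre.subset_connectedComponentIn (F := Aᶜ) (x := ((a : ℝ) : 𝕊))
    (by rw [hKC]; exact hpC) (hKC ▸ hCcA)
  exact this (hKC ▸ hA'Cc hy)
end
end

section
/- Let λ be an equivalence relation on ℚ/ℤ whose classes are finite and pairwise unlinked, such that m_d maps classes onto classes, and such that whenever (t_1,t_2) is a connected component of (ℝ/ℤ)\A for a class A, then (dt_1,dt_2) is a connected component of (ℝ/ℤ)\m_d(A). Suppose Θ = {Θ_1,…,Θ_m} is a degree-d critical portrait such that each Θ_i contained in ℚ/ℤ lies inside a single λ-class and each other Θ_i is unlinked with every λ-class. Then every λ-class is contained in a single Λ_ℚ(Θ)-class, i.e. λ ⊆ Λ_ℚ(Θ). -/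
open Set MeasureTheory Topology

noncomputable section

/-- A degree-`d` critical portrait: a finite collection of finite subsets of `ℝ/ℤ`,
each with at least two elements and a singleton image under `m_d`, pairwise unlinked,
with `Σ (|Θ_j| - 1) = d - 1`. -/
structure CriticalPortrait (d : ℕ) where
  sets : Finset (Set 𝕊)
  finite : ∀ A ∈ sets, A.Finite
  two_le : ∀ A ∈ sets, 2 ≤ A.ncard
  image_ncard : ∀ A ∈ sets, ((md d) '' A).ncard = 1
  pairwise_unlinked : ∀ A ∈ sets, ∀ B ∈ sets, A ≠ B → Unlinked A B
  sum_card : ∑ A ∈ sets, (A.ncard - 1) = d - 1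

namespace CriticalPortrait

variable {d : ℕ}

/-- The union `Θ_1 ∪ ⋯ ∪ Θ_m` of the sets of a critical portrait. -/
def union (P : CriticalPortrait d) : Set 𝕊 := ⋃₀ (↑P.sets : Set (Set 𝕊))

/-- `t` and `t'` are `Θ`-unlinked equivalent: neither lies in `Θ_1 ∪ ⋯ ∪ Θ_m` and
`{t, t'}, Θ_1, …, Θ_m` are pairwise unlinked. -/
def equiv (P : CriticalPortrait d) (t t' : 𝕊) : Prop :=
  t ∉ P.union ∧ t' ∉ P.union ∧ ∀ A ∈ P.sets, Unlinked {t, t'} A ∧ Unlinked A {t, t'}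

/-- `L` is a `Θ`-unlinked class. -/
def IsUnlinkedClass (P : CriticalPortrait d) (L : Set 𝕊) : Prop :=
  ∃ t, t ∉ P.union ∧ L = {t' | P.equiv t t'}

end CriticalPortrait

/-- The open arc `(t, t + ε)` immediately to the right of `t`. -/
def rightSegment (t : 𝕊) (ε : ℝ) : Set 𝕊 :=
  {s | ∃ x : ℝ, (x : 𝕊) = t ∧ ∃ y ∈ Set.Ioo x (x + ε), (y : 𝕊) = s}

/-- The open arc `(t - ε, t)` immediately to the left of `t`. -/
def leftSegment (t : 𝕊) (ε : ℝ) : Set 𝕊 :=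
  {s | ∃ x : ℝ, (x : 𝕊) = t ∧ ∃ y ∈ Set.Ioo (x - ε) x, (y : 𝕊) = s}

/-- `L` is the right itinerary `itin⁺_Θ(t)`: for each `n`, `L n` is a `Θ`-unlinked class
containing a small interval immediately to the right of `dⁿt`. -/
def IsRightItin (d : ℕ) (P : CriticalPortrait d) (t : 𝕊) (L : ℕ → Set 𝕊) : Prop :=
  ∀ n, P.IsUnlinkedClass (L n) ∧ ∃ ε > (0:ℝ), rightSegment ((md d)^[n] t) ε ⊆ L n

/-- `L` is the left itinerary `itin⁻_Θ(t)`. -/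
def IsLeftItin (d : ℕ) (P : CriticalPortrait d) (t : 𝕊) (L : ℕ → Set 𝕊) : Prop :=
  ∀ n, P.IsUnlinkedClass (L n) ∧ ∃ ε > (0:ℝ), leftSegment ((md d)^[n] t) ε ⊆ L n

/-- `L` is one of the two one-sided itineraries of `t`. -/
def HasItin (d : ℕ) (P : CriticalPortrait d) (t : 𝕊) (L : ℕ → Set 𝕊) : Prop :=
  IsRightItin d P t L ∨ IsLeftItin d P t L

/-- One of the one-sided itineraries of `t` coincides with one of the one-sided
itineraries of `t'`. -/
def ItinEq (d : ℕ) (P : CriticalPortrait d) (t t' : 𝕊) : Prop :=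
  ∃ L, HasItin d P t L ∧ HasItin d P t' L

/-- `t` is a rational point of `ℝ/ℤ`, i.e. `t ∈ ℚ/ℤ`. -/
def IsRatC (t : 𝕊) : Prop := ∃ q : ℚ, ((q : ℝ) : 𝕊) = t

/-- The equivalence relation `Λ_ℚ(Θ)` on `ℚ/ℤ`: `t ∼ t'` iff there is a chain of
rationals joining them in which consecutive terms have a common one-sided itinerary. -/
def LambdaQ (d : ℕ) (P : CriticalPortrait d) (t t' : 𝕊) : Prop :=
  IsRatC t ∧ IsRatC t' ∧ Relation.ReflTransGen (fun a b => IsRatC b ∧ ItinEq d P a b) t t'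

/-- `C` is the connected component of `(ℝ/ℤ) \ A` "equal to the arc `(t₁, t₂)`": it is a
connected component of the complement of `A`, containing an interval immediately to the
right of `t₁` and an interval immediately to the left of `t₂`, with `t₁, t₂` in its
closure. -/
def CompOfEnds (A : Set 𝕊) (t1 t2 : 𝕊) (C : Set 𝕊) : Prop :=
  (∃ x, x ∉ A ∧ C = connectedComponentIn Aᶜ x) ∧
  t1 ∈ closure C ∧ t2 ∈ closure C ∧
  (∃ ε > (0:ℝ), rightSegment t1 ε ⊆ C) ∧ (∃ ε > (0:ℝ), leftSegment t2 ε ⊆ C)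
section CircleHelpers

/-- projection ℝ → 𝕊 -/
local notation "π" => ((↑·) : ℝ → 𝕊)

lemma proj_continuous : Continuous ((↑·) : ℝ → 𝕊) := AddCircle.continuous_mk' 1

lemma proj_isOpenMap : IsOpenMap ((↑·) : ℝ → 𝕊) := QuotientAddGroup.isOpenMap_coe

lemma coe_eq_coe_iff {x y : ℝ} : (x : 𝕊) = (y : 𝕊) ↔ ∃ n : ℤ, y = x + n := by
  constructor
  · intro h
    have h2 : ((y - x : ℝ) : 𝕊) = 0 := by
      rw [AddCircle.coe_sub, h, sub_self]
    obtain ⟨n, hn⟩ := (AddCircle.coe_eq_zero_iff (p := 1) (x := y - x)).mp h2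
    exact ⟨n, by have : (n : ℝ) * 1 = y - x := by simpa [zsmul_eq_mul] using hn
                 linarith⟩
  · rintro ⟨n, rfl⟩
    rw [AddCircle.coe_add]
    have hzero : (((n : ℤ) : ℝ) : 𝕊) = 0 := by
      rw [AddCircle.coe_eq_zero_iff (p := 1)]
      exact ⟨n, by simp [zsmul_eq_mul]⟩
    rw [hzero, add_zero]

lemma mem_proj_image_iff {y : ℝ} {S : Set ℝ} :
    (y : 𝕊) ∈ ((↑·) : ℝ → 𝕊) '' S ↔ ∃ n : ℤ, y + n ∈ S := by
  constructor
  · rintro ⟨w, hwS, hw⟩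
    obtain ⟨n, hn⟩ := coe_eq_coe_iff.mp hw.symm
    exact ⟨n, hn ▸ hwS⟩
  · rintro ⟨n, hn⟩
    exact ⟨y + n, hn, (coe_eq_coe_iff.mpr ⟨n, rfl⟩).symm⟩

lemma exists_lift_Ioc (s : 𝕊) (ξ : ℝ) : ∃ γ ∈ Set.Ioc ξ (ξ + 1), (γ : 𝕊) = s := by
  obtain ⟨x, _, hx⟩ := AddCircle.eq_coe_Ico s
  refine ⟨x - (⌈x - ξ⌉ - 1), ⟨?_, ?_⟩, ?_⟩
  · have := Int.ceil_lt_add_one (x - ξ)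
    push_cast
    linarith
  · have := Int.le_ceil (x - ξ)
    push_cast
    linarith
  · rw [show s = (x:𝕊) from hx.symm]
    exact coe_eq_coe_iff.mpr ⟨⌈x - ξ⌉ - 1, by push_cast; ring⟩

lemma exists_lift_Ico (s : 𝕊) (ξ : ℝ) : ∃ γ ∈ Set.Ico ξ (ξ + 1), (γ : 𝕊) = s := by
  obtain ⟨x, _, hx⟩ := AddCircle.eq_coe_Ico s
  refine ⟨x - ⌊x - ξ⌋, ⟨?_, ?_⟩, ?_⟩
  · have := Int.floor_le (x - ξ); linarith
  · have := Int.sub_one_lt_floor (x - ξ); push_cast; linarith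
  · rw [show s = (x:𝕊) from hx.symm]
    exact coe_eq_coe_iff.mpr ⟨⌊x - ξ⌋, by push_cast; ring⟩

/-- the open arc from `x` to `y` -/
def arc (x y : ℝ) : Set 𝕊 := ((↑·) : ℝ → 𝕊) '' Set.Ioo x y

lemma isOpen_arc (x y : ℝ) : IsOpen (arc x y) := proj_isOpenMap _ isOpen_Ioo

lemma isPreconnected_arc (x y : ℝ) : IsPreconnected (arc x y) :=
  isPreconnected_Ioo.image _ proj_continuous.continuousOn

lemma mem_arc_iff {w x y : ℝ} : (w : 𝕊) ∈ arc x y ↔ ∃ n : ℤ, w + n ∈ Set.Ioo x y :=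
  mem_proj_image_iff

lemma mem_arc {w x y : ℝ} (h : w ∈ Set.Ioo x y) : (w : 𝕊) ∈ arc x y := ⟨w, h, rfl⟩

lemma arc_mono {x y x' y' : ℝ} (hx : x' ≤ x) (hy : y ≤ y') : arc x y ⊆ arc x' y' :=
  Set.image_mono (Set.Ioo_subset_Ioo hx hy)

lemma rightSegment_eq (x : ℝ) (ε : ℝ) : rightSegment (x : 𝕊) ε = arc x (x + ε) := by
  ext s
  constructor
  · rintro ⟨x', hx', y, hy, rfl⟩
    obtain ⟨n, hn⟩ := coe_eq_coe_iff.mp hx'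
    refine ⟨y + n, ⟨?_, ?_⟩, (coe_eq_coe_iff.mpr ⟨n, rfl⟩).symm⟩
    · have := hy.1; rw [hn]; linarith
    · have := hy.2; rw [hn]; linarith
  · rintro ⟨y, hy, rfl⟩
    exact ⟨x, rfl, y, hy, rfl⟩

lemma leftSegment_eq (x : ℝ) (ε : ℝ) : leftSegment (x : 𝕊) ε = arc (x - ε) x := by
  ext s
  constructor
  · rintro ⟨x', hx', y, hy, rfl⟩
    obtain ⟨n, hn⟩ := coe_eq_coe_iff.mp hx'
    refine ⟨y + n, ⟨?_, ?_⟩, (coe_eq_coe_iff.mpr ⟨n, rfl⟩).symm⟩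
    · have := hy.1; rw [hn]; linarith
    · have := hy.2; rw [hn]; linarith
  · rintro ⟨y, hy, rfl⟩
    exact ⟨x, rfl, y, hy, rfl⟩

lemma exists_pos_forall_lt {T : Set ℝ} (hT : T.Finite) {α : ℝ} (h : ∀ γ ∈ T, α < γ) :
    ∃ ε > 0, ∀ γ ∈ T, α + ε < γ := by
  revert h
  refine Set.Finite.induction_on (motive := fun T _ => (∀ γ ∈ T, α < γ) → ∃ ε > 0, ∀ γ ∈ T, α + ε < γ)
    T hT ?_ ?_
  · exact fun _ => ⟨1, one_pos, fun γ hγ => absurd hγ (Set.notMem_empty γ)⟩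
  · intro a s _ _ IH h
    obtain ⟨ε, hε, hall⟩ := IH (fun γ hγ => h γ (Set.mem_insert_of_mem a hγ))
    have ha : α < a := h a (Set.mem_insert a s)
    refine ⟨min ε ((a - α) / 2), lt_min hε (by linarith), ?_⟩
    rintro γ (rfl | hγ)
    · have : min ε ((γ - α) / 2) ≤ (γ - α) / 2 := min_le_right _ _
      linarith
    · have h1 := hall γ hγ
      have h2 : min ε ((a - α)/2) ≤ ε := min_le_left _ _
      linarith

/-- small right sliver avoiding a finite set -/
lemma exists_sliver_right {G : Set 𝕊} (hG : G.Finite) (α : ℝ) :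
    ∃ ε > 0, ε ≤ 1 ∧ ∀ γ ∈ Set.Ioc α (α + ε), (γ : 𝕊) ∉ G := by
  set T : Set ℝ := {γ ∈ Set.Ioc α (α + 1) | (γ : 𝕊) ∈ G} with hTdef
  have hTfin : T.Finite := by
    apply Set.Finite.of_finite_image (f := ((↑·) : ℝ → 𝕊))
    · exact hG.subset (by rintro _ ⟨γ, hγ, rfl⟩; exact hγ.2)
    · rintro γ₁ ⟨hγ₁, _⟩ γ₂ ⟨hγ₂, _⟩ hp
      obtain ⟨n, rfl⟩ := coe_eq_coe_iff.mp hp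
      have h1 : (n : ℝ) < 1 := by have := hγ₂.2; have := hγ₁.1; linarith
      have h2 : (-1 : ℝ) < n := by have := hγ₂.1; have := hγ₁.2; linarith
      have hn1 : n < 1 := by exact_mod_cast h1
      have hn2 : -1 < n := by exact_mod_cast h2
      have : n = 0 := by omega
      simp [this]
  obtain ⟨ε, hε, hall⟩ := exists_pos_forall_lt hTfin (fun γ hγ => hγ.1.1)
  refine ⟨min ε 1, by positivity, min_le_right _ _, ?_⟩
  intro γ hγ hγG
  have hγT : γ ∈ T := ⟨⟨hγ.1, le_trans hγ.2 (by have := min_le_right ε 1; linarith)⟩, hγG⟩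
  have := hall γ hγT
  have := hγ.2
  have := min_le_left ε 1
  linarith

lemma exists_sliver_left {G : Set 𝕊} (hG : G.Finite) (β : ℝ) :
    ∃ ε > 0, ε ≤ 1 ∧ ∀ γ ∈ Set.Ico (β - ε) β, (γ : 𝕊) ∉ G := by
  obtain ⟨ε, hε, hε1, hall⟩ := exists_sliver_right (G := (fun s : 𝕊 => -s) '' G) (hG.image _) (-β)
  refine ⟨ε, hε, hε1, ?_⟩
  intro γ hγ hγG
  have : ((-γ : ℝ) : 𝕊) ∈ (fun s : 𝕊 => -s) '' G := ⟨(γ : 𝕊), hγG, by rw [AddCircle.coe_neg]⟩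
  exact hall (-γ) ⟨by have := hγ.2; linarith, by have := hγ.1; linarith⟩ this

lemma unlinked_of_connected {A B K : Set 𝕊} (hK : IsPreconnected K) {x : 𝕊} (hx : x ∈ K)
    (hKB : K ⊆ Bᶜ) (hA : A ⊆ K) : Unlinked A B :=
  ⟨x, hA.trans (hK.subset_connectedComponentIn hx hKB)⟩

lemma isRatC_md {d : ℕ} {s : 𝕊} (h : IsRatC s) : IsRatC (md d s) := by
  obtain ⟨q, rfl⟩ := h
  refine ⟨d * q, ?_⟩
  show ((((d : ℚ) * q : ℚ) : ℝ) : 𝕊) = d • (((q : ℚ) : ℝ) : 𝕊)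
  rw [← AddCircle.coe_nsmul]
  norm_num [nsmul_eq_mul]

lemma isRatC_md_iter {d : ℕ} {s : 𝕊} (h : IsRatC s) (n : ℕ) : IsRatC ((md d)^[n] s) := by
  induction n with
  | zero => simpa using h
  | succ n IH => rw [Function.iterate_succ_apply']; exact isRatC_md IH

end CircleHelpers
section LevelLemma

lemma level {d : ℕ} (P : CriticalPortrait d) (r : 𝕊 → 𝕊 → Prop)
    (hsymm : ∀ t t', r t t' → r t' t)
    (htrans : ∀ t t' t'', r t t' → r t' t'' → r t t'')
    (hunl : ∀ t t', IsRatC t → IsRatC t' → ¬ r t t' →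
      Unlinked {s | r t s} {s | r t' s})
    (hrat : ∀ A ∈ P.sets, (∀ a ∈ A, IsRatC a) → ∃ t, IsRatC t ∧ A ⊆ {s | r t s})
    (hirr : ∀ A ∈ P.sets, ¬ (∀ a ∈ A, IsRatC a) → ∀ t, IsRatC t →
      Unlinked A {s | r t s} ∧ Unlinked {s | r t s} A)
    (t a b : 𝕊) (htq : IsRatC t) (hta : r t a) (htb : r t b)
    (C : Set 𝕊) (hC : CompOfEnds {s | r t s} a b C) :
    ∃ L, P.IsUnlinkedClass L ∧ ∃ ε > (0:ℝ), rightSegment a ε ⊆ L ∧ leftSegment b ε ⊆ L := by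
  obtain ⟨⟨x₀, hx₀, hCdef⟩, hacl, hbcl, ⟨ε₀, hε₀, hrseg⟩, ⟨ε₁, hε₁, hlseg⟩⟩ := hC
  set F : Set 𝕊 := {s | r t s} with hF
  have hCsub : C ⊆ Fᶜ := by rw [hCdef]; exact connectedComponentIn_subset _ _
  have hCpre : IsPreconnected C := by rw [hCdef]; exact isPreconnected_connectedComponentIn
  obtain ⟨α, hαmem, hα⟩ := exists_lift_Ico a 0
  obtain ⟨β, hβmem, hβ⟩ := exists_lift_Ioc b α
  have hαβ : α < β := hβmem.1
  have hβ1 : β ≤ α + 1 := hβmem.2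
  have hrseg' : ∀ δ, 0 < δ → δ ≤ ε₀ → arc α (α + δ) ⊆ C := by
    intro δ _ hδ
    refine subset_trans ?_ hrseg
    rw [← hα, rightSegment_eq]
    exact arc_mono le_rfl (by linarith)
  have hlseg' : ∀ δ, 0 < δ → δ ≤ ε₁ → arc (β - δ) β ⊆ C := by
    intro δ _ hδ
    refine subset_trans ?_ hlseg
    rw [← hβ, leftSegment_eq]
    exact arc_mono (by linarith) le_rfl
  -- C is contained in the arc (α, β)
  have hCarc : C ⊆ arc α β := by
    have hdisj : Disjoint (arc α β) (arc β (α+1)) := by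
      rw [Set.disjoint_left]
      rintro s ⟨w1, hw1, rfl⟩ hs2
      obtain ⟨n, hn⟩ := mem_arc_iff.mp hs2
      have h1 : (0:ℝ) < n := by have := hn.1; have := hw1.2; linarith
      have h2 : (n:ℝ) < 1 := by have := hn.2; have := hw1.1; linarith
      have h1' : (0:ℤ) < n := by exact_mod_cast h1
      have h2' : (n:ℤ) < 1 := by exact_mod_cast h2
      omega
    have hcover : C ⊆ arc α β ∪ arc β (α+1) := by
      intro s hs
      obtain ⟨γ, hγmem, hγ⟩ := exists_lift_Ioc s α
      have hsa : s ≠ a := fun h => (hCsub hs) (show s ∈ F from h ▸ hta)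
      have hsb : s ≠ b := fun h => (hCsub hs) (show s ∈ F from h ▸ htb)
      have hγne : γ ≠ α + 1 := by
        intro h
        apply hsa
        rw [← hγ, h, ← hα]
        exact AddCircle.coe_add_period 1 α
      have hγb : γ ≠ β := fun h => hsb (by rw [← hγ, h, hβ])
      rcases lt_or_gt_of_ne hγb with h | h
      · left; rw [← hγ]; exact mem_arc ⟨hγmem.1, h⟩
      · right; rw [← hγ]; exact mem_arc ⟨h, lt_of_le_of_ne hγmem.2 hγne⟩
    set δ := min ε₀ (β - α) with hδdef
    have hδpos : 0 < δ := lt_min hε₀ (by linarith)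
    have hδ1 : δ ≤ ε₀ := min_le_left _ _
    have hδ2 : δ ≤ β - α := min_le_right _ _
    have hmid : (↑(α + δ/2) : 𝕊) ∈ C ∩ arc α β := by
      constructor
      · exact hrseg' δ hδpos hδ1 (mem_arc ⟨by linarith, by linarith⟩)
      · exact mem_arc ⟨by linarith, by linarith⟩
    exact IsPreconnected.subset_left_of_subset_union (isOpen_arc _ _) (isOpen_arc _ _)
      hdisj hcover ⟨_, hmid⟩ hCpre
  -- no class elements in the arc (α, β)
  have hfree : ∀ s, r t s → s ∉ arc α β := by
    intro g hg hgarc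
    obtain ⟨γ, hγIoo, hγ⟩ := hgarc
    have hUV : Disjoint (arc α γ) (arc γ β) := by
      rw [Set.disjoint_left]
      rintro s ⟨w1, hw1, rfl⟩ hs2
      obtain ⟨n, hn⟩ := mem_arc_iff.mp hs2
      have h1 : (0:ℝ) < n := by have := hn.1; have := hw1.2; linarith
      have h2 : (n:ℝ) < 1 := by have := hn.2; have := hw1.1; linarith
      have h1' : (0:ℤ) < n := by exact_mod_cast h1
      have h2' : (n:ℤ) < 1 := by exact_mod_cast h2
      omega
    have hCUV : C ⊆ arc α γ ∪ arc γ β := by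
      intro s hs
      obtain ⟨w, hw, rfl⟩ := hCarc hs
      have hwγ : w ≠ γ := by
        intro h
        exact (hCsub hs) (show _ ∈ F by rw [h, hγ]; exact hg)
      rcases lt_or_gt_of_ne hwγ with h|h
      · left; exact mem_arc ⟨hw.1, h⟩
      · right; exact mem_arc ⟨h, hw.2⟩
    have hCU : (C ∩ arc α γ).Nonempty := by
      set δ := min ε₀ (γ - α) with hδdef
      have hδpos : 0 < δ := lt_min hε₀ (by linarith [hγIoo.1])
      have hδ2 : δ ≤ γ - α := min_le_right _ _
      exact ⟨↑(α + δ/2), hrseg' δ hδpos (min_le_left _ _) (mem_arc ⟨by linarith, by linarith⟩),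
        mem_arc ⟨by linarith, by linarith⟩⟩
    have hCV : (C ∩ arc γ β).Nonempty := by
      set δ := min ε₁ (β - γ) with hδdef
      have hδpos : 0 < δ := lt_min hε₁ (by linarith [hγIoo.2])
      have hδ2 : δ ≤ β - γ := min_le_right _ _
      exact ⟨↑(β - δ/2), hlseg' δ hδpos (min_le_left _ _) (mem_arc ⟨by linarith, by linarith⟩),
        mem_arc ⟨by linarith, by linarith⟩⟩
    obtain ⟨y, hyC, hyUV⟩ := hCpre (arc α γ) (arc γ β) (isOpen_arc _ _) (isOpen_arc _ _)
      hCUV hCU hCV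
    exact Set.disjoint_left.mp hUV hyUV.1 hyUV.2
  -- the arc equals C
  have harcC : arc α β ⊆ C := by
    have hsub : arc α β ⊆ Fᶜ := fun s hs hsF => hfree s hsF hs
    set δ := min ε₀ (β - α) with hδdef
    have hδpos : 0 < δ := lt_min hε₀ (by linarith)
    have hδ2 : δ ≤ β - α := min_le_right _ _
    have hy : (↑(α + δ/2):𝕊) ∈ C := hrseg' δ hδpos (min_le_left _ _)
      (mem_arc ⟨by linarith, by linarith⟩)
    have hy2 : (↑(α + δ/2):𝕊) ∈ arc α β := mem_arc ⟨by linarith, by linarith⟩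
    have hmain := (isPreconnected_arc α β).subset_connectedComponentIn hy2 hsub
    have hyC' : (↑(α + δ/2):𝕊) ∈ connectedComponentIn Fᶜ x₀ := by rw [← hCdef]; exact hy
    rw [hCdef, connectedComponentIn_eq hyC']
    exact hmain
  have hCeq : C = arc α β := Set.Subset.antisymm hCarc harcC
  -- choose the sliver width ε'
  have hGfin : (P.union : Set 𝕊).Finite := by
    apply Set.Finite.sUnion (Finset.finite_toSet P.sets)
    intro s hs
    exact P.finite s (Finset.mem_coe.mp hs)
  obtain ⟨ε₂, hε₂, _, hright⟩ := exists_sliver_right hGfin α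
  obtain ⟨ε₃, hε₃, _, hleft⟩ := exists_sliver_left hGfin β
  set ε' := min (min ε₂ ε₃) ((β - α)/3) with hε'def
  have hε'pos : 0 < ε' := lt_min (lt_min hε₂ hε₃) (by linarith)
  have hε'2 : ε' ≤ ε₂ := le_trans (min_le_left _ _) (min_le_left _ _)
  have hε'3 : ε' ≤ ε₃ := le_trans (min_le_left _ _) (min_le_right _ _)
  have hε'small : 3 * ε' ≤ β - α := by
    have := min_le_right (min ε₂ ε₃) ((β - α)/3)
    have h : ε' ≤ (β - α)/3 := this
    linarith
  have hrightG : ∀ γ ∈ Set.Ioc α (α + ε'), (γ:𝕊) ∉ P.union :=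
    fun γ hγ => hright γ ⟨hγ.1, le_trans hγ.2 (by linarith)⟩
  have hleftG : ∀ γ ∈ Set.Ico (β - ε') β, (γ:𝕊) ∉ P.union :=
    fun γ hγ => hleft γ ⟨by linarith [hγ.1], hγ.2⟩
  -- dichotomy for portrait pieces
  have hdich : ∀ A ∈ P.sets, A ∩ C = ∅ ∨ A ⊆ C := by
    intro A hA
    have inner : ∀ x : 𝕊, A ⊆ connectedComponentIn Fᶜ x → A ∩ C = ∅ ∨ A ⊆ C := by
      intro x hx
      rcases Set.eq_empty_or_nonempty (connectedComponentIn Fᶜ x ∩ C) with he | hne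
      · left
        rw [Set.eq_empty_iff_forall_notMem]
        rintro z ⟨hzA, hzC⟩
        exact Set.eq_empty_iff_forall_notMem.mp he z ⟨hx hzA, hzC⟩
      · right
        obtain ⟨y, hyD, hyC⟩ := hne
        intro z hz
        have hyC' : y ∈ connectedComponentIn Fᶜ x₀ := by rw [← hCdef]; exact hyC
        rw [hCdef, connectedComponentIn_eq hyC', ← connectedComponentIn_eq hyD]
        exact hx hz
    by_cases hAq : ∀ g ∈ A, IsRatC g
    · obtain ⟨s', hs'q, hsub⟩ := hrat A hA hAq
      by_cases hr : r s' t
      · left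
        have hAF : A ⊆ F := fun g hg => htrans t s' g (hsymm _ _ hr) (hsub hg)
        rw [Set.eq_empty_iff_forall_notMem]
        rintro y ⟨hyA, hyC⟩
        exact (hCsub hyC) (hAF hyA)
      · obtain ⟨x, hx⟩ := hunl s' t hs'q htq hr
        exact inner x (fun g hg => hx (hsub hg))
    · obtain ⟨⟨x, hx⟩, -⟩ := hirr A hA hAq t htq
      exact inner x hx
  -- the base point u
  obtain ⟨pu, hpu⟩ : ∃ pu : ℝ, pu = α + ε'/2 := ⟨_, rfl⟩
  have hpuIoo : pu ∈ Set.Ioo α (α + ε') := ⟨by simp [hpu]; linarith, by simp [hpu]; linarith⟩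
  have hpuG : (↑pu : 𝕊) ∉ P.union := hrightG pu ⟨hpuIoo.1, le_of_lt hpuIoo.2⟩
  -- the core equivalence claim
  have core : ∀ pv : ℝ, (pv ∈ Set.Ioo α (α + ε') ∨ pv ∈ Set.Ioo (β - ε') β) →
      P.equiv (↑pu) (↑pv) := by
    intro pv hpv
    have hpvαβ : α < pv ∧ pv < β := by
      rcases hpv with h|h
      · exact ⟨h.1, by linarith [h.2]⟩
      · exact ⟨by linarith [h.1], h.2⟩
    have hpuβ : pu < β := by linarith [hpuIoo.2]
    have hpvG : (↑pv : 𝕊) ∉ P.union := by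
      rcases hpv with h|h
      · exact hrightG pv ⟨h.1, le_of_lt h.2⟩
      · exact hleftG pv ⟨le_of_lt h.1, h.2⟩
    refine ⟨hpuG, hpvG, ?_⟩
    intro A hA
    have hAG : A ⊆ P.union := fun g hg => ⟨A, Finset.mem_coe.mpr hA, hg⟩
    have hAright : ∀ γ ∈ Set.Ioc α (α + ε'), (γ:𝕊) ∉ A :=
      fun γ hγ hmem => hrightG γ hγ (hAG hmem)
    have hAleft : ∀ γ ∈ Set.Ico (β - ε') β, (γ:𝕊) ∉ A :=
      fun γ hγ hmem => hleftG γ hγ (hAG hmem)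
    -- auxiliary: the "outer" arc avoids the pair
    have houter : ∀ p q : ℝ, α < p → p ≤ q → q < β →
        (∀ z : ℝ, (z = pu ∨ z = pv) → p ≤ z ∧ z ≤ q) →
        arc q (p+1) ⊆ ({(↑pu:𝕊), (↑pv:𝕊)} : Set 𝕊)ᶜ := by
      intro p q hp hpq hq hzs
      rintro y ⟨w, hw, rfl⟩ hy
      have hex : ∃ z : ℝ, (z = pu ∨ z = pv) ∧ (↑w : 𝕊) = ↑z := by
        rcases hy with h|h
        exacts [⟨pu, Or.inl rfl, h⟩, ⟨pv, Or.inr rfl, h⟩]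
      obtain ⟨z, hz, hwz⟩ := hex
      obtain ⟨hz1, hz2⟩ := hzs z hz
      obtain ⟨n, hn⟩ := coe_eq_coe_iff.mp hwz
      have h1 : (n:ℝ) < 0 := by have := hw.1; linarith
      have h2 : (-1:ℝ) < n := by have := hw.2; linarith
      have h1' : (n:ℤ) < 0 := by exact_mod_cast h1
      have h2' : (-1:ℤ) < n := by exact_mod_cast h2
      omega
    rcases hdich A hA with hemp | hsubC
    · -- A misses C: go through C, and around the outside
      have hCA : C ⊆ Aᶜ := fun y hy hyA =>
        Set.eq_empty_iff_forall_notMem.mp hemp y ⟨hyA, hy⟩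
      constructor
      · refine unlinked_of_connected hCpre (x := (↑pu:𝕊))
          (harcC (mem_arc ⟨hpuIoo.1, hpuβ⟩)) hCA ?_
        intro y hy
        rcases hy with h|h
        · rw [h]; exact harcC (mem_arc ⟨hpuIoo.1, hpuβ⟩)
        · rw [Set.mem_singleton_iff.mp h]; exact harcC (mem_arc hpvαβ)
      · set p := min pu pv with hpdef
        set q := max pu pv with hqdef
        have hpq : p ≤ q := min_le_max
        have hαp : α < p := lt_min hpuIoo.1 hpvαβ.1
        have hqβ : q < β := max_lt hpuβ hpvαβ.2
        have hKne : (↑((q + p + 1)/2) : 𝕊) ∈ arc q (p+1) :=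
          mem_arc ⟨by linarith, by linarith⟩
        have hKcompl := houter p q hαp hpq hqβ (by
          rintro z (rfl|rfl)
          exacts [⟨min_le_left _ _, le_max_left _ _⟩, ⟨min_le_right _ _, le_max_right _ _⟩])
        refine unlinked_of_connected (isPreconnected_arc q (p+1)) hKne hKcompl ?_
        intro g hg
        obtain ⟨γ, hγmem, hγ⟩ := exists_lift_Ioc g α
        have hgnotC : g ∉ C := fun h =>
          Set.eq_empty_iff_forall_notMem.mp hemp g ⟨hg, h⟩
        have hγβ : β ≤ γ := by
          by_contra hlt
          push_neg at hlt
          exact hgnotC (by rw [hCeq, ← hγ]; exact mem_arc ⟨hγmem.1, hlt⟩)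
        rw [← hγ]
        exact mem_arc ⟨by linarith, by linarith [hγmem.2]⟩
    · -- A inside C: its lifts live in the middle of (α, β)
      have hlift : ∀ g ∈ A, ∃ γ, γ ∈ Set.Ioo (α + ε') (β - ε') ∧ (γ:𝕊) = g := by
        intro g hg
        have hgC : g ∈ arc α β := by rw [← hCeq]; exact hsubC hg
        obtain ⟨w, hw, rfl⟩ := hgC
        refine ⟨w, ⟨?_, ?_⟩, rfl⟩
        · by_contra hle
          push_neg at hle
          exact hAright w ⟨hw.1, hle⟩ hg
        · by_contra hle
          push_neg at hle
          exact hAleft w ⟨hle, hw.2⟩ hg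
      rcases hpv with hvr | hvl
      · -- v in the right sliver
        constructor
        · have hKA : arc α (α+ε') ⊆ Aᶜ := by
            rintro y ⟨w, hw, rfl⟩ hyA
            exact hAright w ⟨hw.1, le_of_lt hw.2⟩ hyA
          refine unlinked_of_connected (isPreconnected_arc _ _) (mem_arc hpuIoo) hKA ?_
          intro y hy
          rcases hy with h|h
          · rw [h]; exact mem_arc hpuIoo
          · rw [Set.mem_singleton_iff.mp h]; exact mem_arc hvr
        · set p := min pu pv with hpdef
          set q := max pu pv with hqdef
          have hpq : p ≤ q := min_le_max
          have hαp : α < p := lt_min hpuIoo.1 hvr.1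
          have hqε : q < α + ε' := max_lt hpuIoo.2 hvr.2
          have hqβ : q < β := by linarith
          have hKne : (↑((q + p + 1)/2) : 𝕊) ∈ arc q (p+1) :=
            mem_arc ⟨by linarith, by linarith⟩
          have hKcompl := houter p q hαp hpq hqβ (by
            rintro z (rfl|rfl)
            exacts [⟨min_le_left _ _, le_max_left _ _⟩, ⟨min_le_right _ _, le_max_right _ _⟩])
          refine unlinked_of_connected (isPreconnected_arc q (p+1)) hKne hKcompl ?_
          intro g hg
          obtain ⟨γ, hγmem, hγ⟩ := hlift g hg
          rw [← hγ]
          exact mem_arc ⟨by linarith [hγmem.1], by linarith [hγmem.2]⟩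
      · -- v in the left sliver
        have hpupv : pu < pv := by
          have := hvl.1
          simp only [hpu]
          linarith
        constructor
        · -- go around the outside
          have hKA : arc (β-ε') (α+1+ε') ⊆ Aᶜ := by
            rintro y ⟨w, hw, rfl⟩ hyA
            obtain ⟨γ, hγmem, hγg⟩ := hlift _ hyA
            obtain ⟨n, hn⟩ := coe_eq_coe_iff.mp hγg.symm
            have h1 : (-1:ℝ) < n := by have := hw.2; have := hγmem.1; linarith
            have h2 : (n:ℝ) < 0 := by have := hw.1; have := hγmem.2; linarith
            have h1' : (-1:ℤ) < n := by exact_mod_cast h1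
            have h2' : (n:ℤ) < 0 := by exact_mod_cast h2
            omega
          refine unlinked_of_connected (isPreconnected_arc _ _) (x := (↑pv:𝕊))
            (mem_arc ⟨hvl.1, by linarith [hvl.2]⟩) hKA ?_
          intro y hy
          rcases hy with h|h
          · rw [h]
            have : ((pu:ℝ):𝕊) = ((pu+1 : ℝ):𝕊) := coe_eq_coe_iff.mpr ⟨1, by push_cast; ring⟩
            rw [this]
            exact mem_arc ⟨by simp only [hpu]; linarith, by simp only [hpu]; linarith⟩
          · rw [Set.mem_singleton_iff.mp h]
            exact mem_arc ⟨hvl.1, by linarith [hvl.2]⟩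
        · -- the middle arc between u and v
          have hKcompl : arc pu pv ⊆ ({(↑pu:𝕊), (↑pv:𝕊)} : Set 𝕊)ᶜ := by
            rintro y ⟨w, hw, rfl⟩ hy
            have hex : ∃ z : ℝ, (z = pu ∨ z = pv) ∧ (↑w : 𝕊) = ↑z := by
              rcases hy with h|h
              exacts [⟨pu, Or.inl rfl, h⟩, ⟨pv, Or.inr rfl, Set.mem_singleton_iff.mp h ▸ rfl⟩]
            obtain ⟨z, hz, hwz⟩ := hex
            obtain ⟨n, hn⟩ := coe_eq_coe_iff.mp hwz
            have hzb : α < z ∧ z < β := by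
              rcases hz with rfl|rfl
              · exact ⟨hpuIoo.1, hpuβ⟩
              · exact hpvαβ
            have hwb : α < w ∧ w < β := by
              constructor
              · have := hw.1; simp only [hpu] at this ⊢; linarith [hpuIoo.1]
              · have := hw.2; linarith [hpvαβ.2]
            have h1 : (-1:ℝ) < n := by have := hzb.1; have := hwb.2; linarith
            have h2 : (n:ℝ) < 1 := by have := hzb.2; have := hwb.1; linarith
            have h1' : (-1:ℤ) < n := by exact_mod_cast h1
            have h2' : (n:ℤ) < 1 := by exact_mod_cast h2
            have hn0 : n = 0 := by omega
            rw [hn0] at hn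
            push_cast at hn
            rw [add_zero] at hn
            rcases hz with rfl|rfl
            · exact absurd hn (ne_of_lt hw.1)
            · exact absurd hn.symm (ne_of_lt hw.2)
          have hKne : (↑((pu + pv)/2) : 𝕊) ∈ arc pu pv :=
            mem_arc ⟨by linarith, by linarith⟩
          refine unlinked_of_connected (isPreconnected_arc pu pv) hKne hKcompl ?_
          intro g hg
          obtain ⟨γ, hγmem, hγ⟩ := hlift g hg
          rw [← hγ]
          refine mem_arc ⟨?_, ?_⟩
          · have := hγmem.1; simp only [hpu]; linarith
          · have := hγmem.2; linarith [hvl.1]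
  -- conclude
  refine ⟨{v | P.equiv (↑pu) v}, ⟨↑pu, hpuG, rfl⟩, ε', hε'pos, ?_, ?_⟩
  · rw [← hα, rightSegment_eq]
    rintro y ⟨w, hw, rfl⟩
    exact core w (Or.inl hw)
  · rw [← hβ, leftSegment_eq]
    rintro y ⟨w, hw, rfl⟩
    exact core w (Or.inr hw)

end LevelLemma
section KeyLemma

lemma key_itin {d : ℕ} (P : CriticalPortrait d) (r : 𝕊 → 𝕊 → Prop)
    (hsymm : ∀ t t', r t t' → r t' t)
    (htrans : ∀ t t' t'', r t t' → r t' t'' → r t t'')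
    (hunl : ∀ t t', IsRatC t → IsRatC t' → ¬ r t t' →
      Unlinked {s | r t s} {s | r t' s})
    (hmap : ∀ t, IsRatC t → md d '' {s | r t s} = {s | r (md d t) s})
    (hcomp : ∀ t, IsRatC t → ∀ t1 t2 C, CompOfEnds {s | r t s} t1 t2 C →
      ∃ C', CompOfEnds (md d '' {s | r t s}) (md d t1) (md d t2) C')
    (hrat : ∀ A ∈ P.sets, (∀ a ∈ A, IsRatC a) → ∃ t, IsRatC t ∧ A ⊆ {s | r t s})
    (hirr : ∀ A ∈ P.sets, ¬ (∀ a ∈ A, IsRatC a) → ∀ t, IsRatC t →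
      Unlinked A {s | r t s} ∧ Unlinked {s | r t s} A)
    (t a b : 𝕊) (htq : IsRatC t) (hta : r t a) (htb : r t b)
    (α β : ℝ) (hα : (α:𝕊) = a) (hβ : (β:𝕊) = b) (hαβ : α < β) (hβ1 : β ≤ α + 1)
    (hfree : ∀ s, r t s → s ∉ arc α β) :
    ItinEq d P a b := by
  have hlev : ∀ n, IsRatC ((md d)^[n] t) ∧ r ((md d)^[n] t) ((md d)^[n] a) ∧
      r ((md d)^[n] t) ((md d)^[n] b) := by
    intro n
    induction n with
    | zero => exact ⟨htq, hta, htb⟩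
    | succ n IH =>
      obtain ⟨hq, ha, hb⟩ := IH
      have hnext : ∀ y : 𝕊, r ((md d)^[n] t) y → r (md d ((md d)^[n] t)) (md d y) := by
        intro y hy
        have hmem : md d y ∈ md d '' {s | r ((md d)^[n] t) s} := ⟨y, hy, rfl⟩
        rw [hmap _ hq] at hmem
        exact hmem
      refine ⟨?_, ?_, ?_⟩
      · rw [Function.iterate_succ_apply']
        exact isRatC_md hq
      · rw [Function.iterate_succ_apply' (f := md d) (n := n),
          Function.iterate_succ_apply' (f := md d) (n := n)]
        exact hnext _ ha
      · rw [Function.iterate_succ_apply' (f := md d) (n := n),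
          Function.iterate_succ_apply' (f := md d) (n := n)]
        exact hnext _ hb
  have hcomps : ∀ n, ∃ C,
      CompOfEnds {s | r ((md d)^[n] t) s} ((md d)^[n] a) ((md d)^[n] b) C := by
    intro n
    induction n with
    | zero =>
      simp only [Function.iterate_zero_apply]
      refine ⟨connectedComponentIn {s | r t s}ᶜ (↑((α+β)/2)), ?_⟩
      have hmidarc : (↑((α+β)/2):𝕊) ∈ arc α β := mem_arc ⟨by linarith, by linarith⟩
      have hmidF : (↑((α+β)/2):𝕊) ∉ {s | r t s} := fun h => hfree _ h hmidarc
      have harcF : arc α β ⊆ {s | r t s}ᶜ := fun s hs hsF => hfree s hsF hs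
      have harcC : arc α β ⊆ connectedComponentIn {s | r t s}ᶜ (↑((α+β)/2)) :=
        (isPreconnected_arc α β).subset_connectedComponentIn hmidarc harcF
      have hclarc : closure (arc α β) ⊆
          closure (connectedComponentIn {s | r t s}ᶜ (↑((α+β)/2))) := closure_mono harcC
      refine ⟨⟨_, hmidF, rfl⟩, ?_, ?_, ⟨β - α, by linarith, ?_⟩, ⟨β - α, by linarith, ?_⟩⟩
      · rw [← hα]
        apply hclarc
        apply image_closure_subset_closure_image proj_continuous
        rw [closure_Ioo (ne_of_lt hαβ)]
        exact ⟨α, Set.left_mem_Icc.mpr (le_of_lt hαβ), rfl⟩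
      · rw [← hβ]
        apply hclarc
        apply image_closure_subset_closure_image proj_continuous
        rw [closure_Ioo (ne_of_lt hαβ)]
        exact ⟨β, Set.right_mem_Icc.mpr (le_of_lt hαβ), rfl⟩
      · rw [← hα, rightSegment_eq]
        have he : α + (β - α) = β := by ring
        rw [he]
        exact harcC
      · rw [← hβ, leftSegment_eq]
        have he : β - (β - α) = α := by ring
        rw [he]
        exact harcC
    | succ n IH =>
      obtain ⟨C, hC⟩ := IH
      obtain ⟨hq, -, -⟩ := hlev n
      obtain ⟨C', hC'⟩ := hcomp _ hq _ _ _ hC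
      rw [hmap _ hq] at hC'
      refine ⟨C', ?_⟩
      rw [Function.iterate_succ_apply' (f := md d) (n := n),
        Function.iterate_succ_apply' (f := md d) (n := n),
        Function.iterate_succ_apply' (f := md d) (n := n)]
      exact hC'
  have hLs : ∀ n, ∃ L, P.IsUnlinkedClass L ∧ ∃ ε > (0:ℝ),
      rightSegment ((md d)^[n] a) ε ⊆ L ∧ leftSegment ((md d)^[n] b) ε ⊆ L := by
    intro n
    obtain ⟨C, hC⟩ := hcomps n
    obtain ⟨hq, ha, hb⟩ := hlev n
    exact level P r hsymm htrans hunl hrat hirr _ _ _ hq ha hb C hC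
  choose L hL1 ε hε hseg using hLs
  exact ⟨L, Or.inl (fun n => ⟨hL1 n, ε n, hε n, (hseg n).1⟩),
    Or.inr (fun n => ⟨hL1 n, ε n, hε n, (hseg n).2⟩)⟩

end KeyLemma


/-- If `λ` is an equivalence relation on `ℚ/ℤ` with finite pairwise-unlinked classes,
compatible with `m_d` in the sense that `m_d` maps classes onto classes and components
`(t₁,t₂)` of class complements to components `(dt₁,dt₂)`, and if `Θ` is a critical
portrait each of whose rational sets lies inside a single `λ`-class while each
irrational set is unlinked with every `λ`-class, then `λ ⊆ Λ_ℚ(Θ)`. -/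
theorem lambda_subset_LambdaQ (d : ℕ) (hd : 2 ≤ d) (P : CriticalPortrait d)
    (r : 𝕊 → 𝕊 → Prop)
    (hdom : ∀ t t', r t t' → IsRatC t ∧ IsRatC t')
    (hrefl : ∀ t, IsRatC t → r t t)
    (hsymm : ∀ t t', r t t' → r t' t)
    (htrans : ∀ t t' t'', r t t' → r t' t'' → r t t'')
    (hfin : ∀ t, {s | r t s}.Finite)
    (hunl : ∀ t t', IsRatC t → IsRatC t' → ¬ r t t' →
      Unlinked {s | r t s} {s | r t' s})
    (hmap : ∀ t, IsRatC t → md d '' {s | r t s} = {s | r (md d t) s})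
    (hcomp : ∀ t, IsRatC t → ∀ t1 t2 C, CompOfEnds {s | r t s} t1 t2 C →
      ∃ C', CompOfEnds (md d '' {s | r t s}) (md d t1) (md d t2) C')
    (hrat : ∀ A ∈ P.sets, (∀ a ∈ A, IsRatC a) →
      ∃ t, IsRatC t ∧ A ⊆ {s | r t s})
    (hirr : ∀ A ∈ P.sets, ¬ (∀ a ∈ A, IsRatC a) →
      ∀ t, IsRatC t → Unlinked A {s | r t s} ∧ Unlinked {s | r t s} A) :
    ∀ t t', r t t' → LambdaQ d P t t' := by
  have key : ∀ (a b : 𝕊) (α β : ℝ), r a b → (α:𝕊) = a → (β:𝕊) = b → α < β → β ≤ α + 1 →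
      (∀ s, r a s → s ∉ arc α β) → ItinEq d P a b := by
    intro a b α β hab hα hβ h1 h2 hfr
    exact key_itin P r hsymm htrans hunl hmap hcomp hrat hirr a a b (hdom _ _ hab).1
      (hrefl a (hdom _ _ hab).1) hab α β hα hβ h1 h2 hfr
  have single : ∀ (a b : 𝕊) (α β : ℝ), r a b → (α:𝕊) = a → (β:𝕊) = b → α < β → β ≤ α + 1 →
      {s | r a s} ∩ arc α β = ∅ →
      Relation.ReflTransGen (fun x y => IsRatC y ∧ ItinEq d P x y) a b := by
    intro a b α β hab hα hβ h1 h2 hemp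
    have hfr : ∀ s, r a s → s ∉ arc α β := fun s hs harc =>
      Set.eq_empty_iff_forall_notMem.mp hemp s ⟨hs, harc⟩
    exact Relation.ReflTransGen.single ⟨(hdom _ _ hab).2, key a b α β hab hα hβ h1 h2 hfr⟩
  have chain : ∀ (n : ℕ) (a b : 𝕊) (α β : ℝ), r a b → (α:𝕊) = a → (β:𝕊) = b → α < β →
      β ≤ α + 1 → ({s | r a s} ∩ arc α β).ncard ≤ n →
      Relation.ReflTransGen (fun x y => IsRatC y ∧ ItinEq d P x y) a b := by
    intro n
    induction n with
    | zero =>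
      intro a b α β hab hα hβ h1 h2 hcard
      have hfinS : ({s | r a s} ∩ arc α β).Finite := (hfin a).subset Set.inter_subset_left
      have hemp : {s | r a s} ∩ arc α β = ∅ :=
        (Set.ncard_eq_zero hfinS).mp (Nat.le_zero.mp hcard)
      exact single a b α β hab hα hβ h1 h2 hemp
    | succ n IH =>
      intro a b α β hab hα hβ h1 h2 hcard
      rcases Set.eq_empty_or_nonempty ({s | r a s} ∩ arc α β) with hemp | ⟨c, hcF, hcarc⟩
      · exact single a b α β hab hα hβ h1 h2 hemp
      · have hfinS : ({s | r a s} ∩ arc α β).Finite := (hfin a).subset Set.inter_subset_left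
        obtain ⟨γ, hγIoo, hγ⟩ := hcarc
        have hrac : r a c := hcF
        have hno1 : c ∉ arc α γ := by
          rw [← hγ]
          intro hc
          obtain ⟨m, hm⟩ := mem_arc_iff.mp hc
          have hx1 : (m:ℝ) < 0 := by have := hm.2; linarith
          have hx2 : (-1:ℝ) < m := by have := hm.1; have := hγIoo.2; linarith
          have hx1' : (m:ℤ) < 0 := by exact_mod_cast hx1
          have hx2' : (-1:ℤ) < m := by exact_mod_cast hx2
          omega
        have hno2 : c ∉ arc γ β := by
          rw [← hγ]
          intro hc
          obtain ⟨m, hm⟩ := mem_arc_iff.mp hc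
          have hx1 : (0:ℝ) < m := by have := hm.1; linarith
          have hx2 : (m:ℝ) < 1 := by have := hm.2; have := hγIoo.1; linarith
          have hx1' : (0:ℤ) < m := by exact_mod_cast hx1
          have hx2' : (m:ℤ) < 1 := by exact_mod_cast hx2
          omega
        have hcmem : c ∈ {s | r a s} ∩ arc α β := ⟨hcF, ⟨γ, hγIoo, hγ⟩⟩
        have hdlt : (({s | r a s} ∩ arc α β) \ {c}).ncard ≤ n := by
          have := Set.ncard_diff_singleton_lt_of_mem hcmem hfinS
          omega
        have hsub1 : {s | r a s} ∩ arc α γ ⊆ ({s | r a s} ∩ arc α β) \ {c} := by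
          rintro y ⟨hy1, hy2⟩
          refine ⟨⟨hy1, arc_mono le_rfl (le_of_lt hγIoo.2) hy2⟩, ?_⟩
          intro h
          exact hno1 ((Set.mem_singleton_iff.mp h) ▸ hy2)
        have hsub2 : {s | r c s} ∩ arc γ β ⊆ ({s | r a s} ∩ arc α β) \ {c} := by
          rintro y ⟨hy1, hy2⟩
          refine ⟨⟨htrans _ _ _ hrac hy1, arc_mono (le_of_lt hγIoo.1) le_rfl hy2⟩, ?_⟩
          intro h
          exact hno2 ((Set.mem_singleton_iff.mp h) ▸ hy2)
        have c1 := IH a c α γ hrac hα hγ hγIoo.1 (by linarith [hγIoo.2, h2])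
          (le_trans (Set.ncard_le_ncard hsub1 hfinS.diff) hdlt)
        have c2 := IH c b γ β (htrans _ _ _ (hsymm _ _ hrac) hab) hγ hβ hγIoo.2 (by linarith [hγIoo.1, h2])
          (le_trans (Set.ncard_le_ncard hsub2 hfinS.diff) hdlt)
        exact c1.trans c2
  intro t t' h
  refine ⟨(hdom _ _ h).1, (hdom _ _ h).2, ?_⟩
  obtain ⟨α, hαmem, hα⟩ := exists_lift_Ico t 0
  obtain ⟨β, hβmem, hβ⟩ := exists_lift_Ioc t' α
  exact chain _ t t' α β h hα hβ hβmem.1 hβmem.2 le_rfl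
end
end

section
/- Let Θ be a degree-d critical portrait in which every argument occurring in Θ_1 ∪ ⋯ ∪ Θ_m is rational and strictly pre-periodic under m_d. Then Θ has aperiodic kneading: for no θ ∈ Θ_1 ∪ ⋯ ∪ Θ_m is either itinerary itin^±_Θ(θ) periodic under the one-sided shift. -/
open Set MeasureTheory Topology

noncomputable section

section Aux

/-- canonical lift into `[r, r+1)` -/
def wlift (r : ℝ) (w : 𝕊) : ℝ := (AddCircle.equivIco 1 r w : ℝ)

lemma wlift_mem (r : ℝ) (w : 𝕊) : wlift r w ∈ Set.Ico r (r + 1) :=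
  (AddCircle.equivIco 1 r w).2

lemma coe_wlift (r : ℝ) (w : 𝕊) : ((wlift r w : ℝ) : 𝕊) = w :=
  (AddCircle.equivIco 1 r).symm_apply_apply w

lemma coe_inj_Ico {r x y : ℝ} (hx : x ∈ Set.Ico r (r + 1)) (hy : y ∈ Set.Ico r (r + 1))
    (h : ((x : ℝ) : 𝕊) = y) : x = y :=
  (AddCircle.coe_eq_coe_iff_of_mem_Ico hx hy).1 h

lemma wlift_coe {r x : ℝ} (hx : x ∈ Set.Ico r (r + 1)) : wlift r ((x : ℝ) : 𝕊) = x :=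
  coe_inj_Ico (wlift_mem r _) hx (coe_wlift r _)

lemma wlift_inj {r : ℝ} {w w' : 𝕊} (h : wlift r w = wlift r w') : w = w' := by
  have := coe_wlift r w
  rw [h, coe_wlift] at this
  exact this.symm

lemma coe_add_one (x : ℝ) : ((x + 1 : ℝ) : 𝕊) = ((x : ℝ) : 𝕊) :=
  AddCircle.coe_add_period 1 x

/-- Two points in the two different open arcs determined by two points of the circle
cannot lie in a common preconnected subset of the complement of those two points. -/
lemma arcs_disconnect {β₁ β₂ α α' : ℝ} (h1 : β₁ < β₂) (h2 : β₂ < β₁ + 1)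
    (hα : α ∈ Set.Ioo β₁ β₂) (hα' : α' ∈ Set.Ioo β₂ (β₁ + 1)) {S : Set 𝕊}
    (hpc : IsPreconnected S) (hsub : S ⊆ ({((β₁ : ℝ) : 𝕊), ((β₂ : ℝ) : 𝕊)} : Set 𝕊)ᶜ)
    (ha : ((α : ℝ) : 𝕊) ∈ S) (ha' : ((α' : ℝ) : 𝕊) ∈ S) : False := by
  set U : Set 𝕊 := (fun x : ℝ => ((x : ℝ) : 𝕊)) '' Set.Ioo β₁ β₂ with hU
  set V : Set 𝕊 := (fun x : ℝ => ((x : ℝ) : 𝕊)) '' Set.Ioo β₂ (β₁ + 1) with hV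
  have hUopen : IsOpen U := QuotientAddGroup.isOpenMap_coe _ isOpen_Ioo
  have hVopen : IsOpen V := QuotientAddGroup.isOpenMap_coe _ isOpen_Ioo
  have hcover : S ⊆ U ∪ V := by
    intro w hw
    have hwmem := hsub hw
    simp only [Set.mem_compl_iff, Set.mem_insert_iff, Set.mem_singleton_iff, not_or] at hwmem
    have hm := wlift_mem β₁ w
    have hc := coe_wlift β₁ w
    rcases lt_trichotomy (wlift β₁ w) β₂ with hlt | heq | hgt
    · left
      have hne : wlift β₁ w ≠ β₁ := by
        intro h; apply hwmem.1; rw [← hc, h]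
      exact ⟨wlift β₁ w, ⟨lt_of_le_of_ne hm.1 (Ne.symm hne), hlt⟩, hc⟩
    · exact absurd (by rw [← hc, heq]) hwmem.2
    · right
      exact ⟨wlift β₁ w, ⟨hgt, hm.2⟩, hc⟩
  have hdisj : U ∩ V = ∅ := by
    ext w
    simp only [Set.mem_inter_iff, Set.mem_empty_iff_false, iff_false]
    rintro ⟨⟨y₁, hy₁, hy₁e⟩, ⟨y₂, hy₂, hy₂e⟩⟩
    have h₁ : y₁ ∈ Set.Ico β₁ (β₁ + 1) := ⟨hy₁.1.le, hy₁.2.trans h2⟩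
    have h₂ : y₂ ∈ Set.Ico β₁ (β₁ + 1) := ⟨h1.le.trans hy₂.1.le, hy₂.2⟩
    have := coe_inj_Ico h₁ h₂ (by simp only [] at hy₁e hy₂e; rw [hy₁e, hy₂e])
    exact absurd (this ▸ hy₁.2) (not_lt.2 hy₂.1.le)
  obtain ⟨z, hz⟩ := hpc U V hUopen hVopen hcover ⟨_, ha, ⟨α, hα, rfl⟩⟩ ⟨_, ha', ⟨α', hα', rfl⟩⟩
  rw [Set.mem_inter_iff] at hz
  have : z ∈ U ∩ V := hz.2
  rw [hdisj] at this
  exact this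

end Aux

section Aux2

lemma unlinked_contra {A : Set 𝕊} {β₁ β₂ α α' : ℝ} (h1 : β₁ < β₂) (h2 : β₂ < β₁ + 1)
    (hα : α ∈ Set.Ioo β₁ β₂) (hα' : α' ∈ Set.Ioo β₂ (β₁ + 1))
    (haA : ((α : ℝ) : 𝕊) ∈ A) (ha'A : ((α' : ℝ) : 𝕊) ∈ A)
    (hU : Unlinked A ({((β₁ : ℝ) : 𝕊), ((β₂ : ℝ) : 𝕊)} : Set 𝕊)) : False := by
  obtain ⟨x, hx⟩ := hU
  exact arcs_disconnect h1 h2 hα hα' isPreconnected_connectedComponentIn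
    (connectedComponentIn_subset _ _) (hx haA) (hx ha'A)

/-- From `Unlinked A B` (`A` in one component of `Bᶜ`), a point of `A` cannot lie
strictly between two points of `B` in a length-1 window while another point of `A`
lies outside. -/
lemma sep_of_unlinked {A B : Set 𝕊} (r : ℝ) (hU : Unlinked A B)
    {b₁ b₂ : 𝕊} (hb₁ : b₁ ∈ B) (hb₂ : b₂ ∈ B) {a₁ a₂ : 𝕊} (ha₁ : a₁ ∈ A) (ha₂ : a₂ ∈ A)
    (h₁ : wlift r b₁ < wlift r a₁) (h₂ : wlift r a₁ < wlift r b₂)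
    (h₃ : wlift r a₂ < wlift r b₁ ∨ wlift r b₂ < wlift r a₂) : False := by
  obtain ⟨x, hx⟩ := hU
  have hx' : A ⊆ connectedComponentIn ({b₁, b₂} : Set 𝕊)ᶜ x := by
    refine hx.trans (connectedComponentIn_mono x ?_)
    intro w hw
    simp only [Set.mem_compl_iff, Set.mem_insert_iff, Set.mem_singleton_iff, not_or] at hw ⊢
    exact ⟨fun h => hw (h ▸ hb₁), fun h => hw (h ▸ hb₂)⟩
  set β₁ := wlift r b₁
  set β₂ := wlift r b₂
  have hm₁ := wlift_mem r b₁
  have hm₂ := wlift_mem r b₂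
  have hma₂ := wlift_mem r a₂
  have hpair : ({((β₁ : ℝ) : 𝕊), ((β₂ : ℝ) : 𝕊)} : Set 𝕊) = {b₁, b₂} := by
    rw [coe_wlift, coe_wlift]
  have hS : IsPreconnected (connectedComponentIn ({b₁, b₂} : Set 𝕊)ᶜ x) :=
    isPreconnected_connectedComponentIn
  have hsub := connectedComponentIn_subset ({b₁, b₂} : Set 𝕊)ᶜ x
  have h12 : β₁ < β₂ := h₁.trans h₂
  have h21 : β₂ < β₁ + 1 := hm₂.2.trans_le (by linarith [hm₁.1])
  rcases h₃ with h₃ | h₃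
  · -- use lift `wlift r a₂ + 1`
    refine arcs_disconnect h12 h21 (α := wlift r a₁) (α' := wlift r a₂ + 1) ⟨h₁, h₂⟩
      ⟨by linarith [hma₂.1, hm₂.2], by linarith⟩ hS (hpair ▸ hsub) ?_ ?_
    · rw [coe_wlift]; exact hx' ha₁
    · rw [coe_add_one, coe_wlift]; exact hx' ha₂
  · refine arcs_disconnect h12 h21 (α := wlift r a₁) (α' := wlift r a₂) ⟨h₁, h₂⟩
      ⟨h₃, by linarith [hma₂.2, hm₁.1]⟩ hS (hpair ▸ hsub) ?_ ?_
    · rw [coe_wlift]; exact hx' ha₁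
    · rw [coe_wlift]; exact hx' ha₂

end Aux2

section Counting

/-- The key counting lemma: a pairwise "linearly unlinked" family of finite sets, each
within a coset of `(1/d)ℤ`, with all lift-values in `(u,v)`, has total excess `< d(v-u)`. -/
lemma lin_count (d : ℕ) (hd : 0 < d) (r : ℝ) :
    ∀ (n : ℕ) (F : Finset (Set 𝕊)) (u v : ℝ),
      (∑ A ∈ F, A.ncard) ≤ n →
      u < v →
      (∀ A ∈ F, A.Finite) → (∀ A ∈ F, A.Nonempty) →
      (∀ A ∈ F, ∀ a ∈ A, wlift r a ∈ Set.Ioo u v) →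
      (∀ A ∈ F, ∀ a ∈ A, ∀ b ∈ A, ∃ m : ℤ, (wlift r a - wlift r b) * d = m) →
      (∀ A ∈ F, ∀ B ∈ F, A ≠ B → ∀ a ∈ A, ∀ b ∈ B, wlift r a ≠ wlift r b) →
      (∀ A ∈ F, ∀ B ∈ F, A ≠ B → ∀ b₁ ∈ B, ∀ b₂ ∈ B, ∀ a₁ ∈ A, ∀ a₂ ∈ A,
        wlift r b₁ < wlift r a₁ → wlift r a₁ < wlift r b₂ →
        (wlift r a₂ < wlift r b₁ ∨ wlift r b₂ < wlift r a₂) → False) →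
      ((∑ A ∈ F, (A.ncard - 1) : ℕ) : ℝ) < d * (v - u) := by
  have hdpos : (0:ℝ) < d := by exact_mod_cast hd
  intro n
  induction n with
  | zero =>
    intro F u v hsum hu hfin hne _ _ _ _
    have hF : F = ∅ := by
      by_contra hF
      obtain ⟨A, hA⟩ := Finset.nonempty_iff_ne_empty.2 hF
      have h1 : 0 < A.ncard := (Set.ncard_pos (hfin A hA)).2 (hne A hA)
      have h2 : A.ncard ≤ ∑ B ∈ F, B.ncard :=
        Finset.single_le_sum (fun _ _ => Nat.zero_le _) hA
      omega
    subst hF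
    simpa using mul_pos hdpos (sub_pos.2 hu)
  | succ n ih =>
    intro F u v hsum hu hfin hne hvals hlat hdisj hsep
    classical
    rcases Finset.eq_empty_or_nonempty F with rfl | hFne
    · simpa using mul_pos hdpos (sub_pos.2 hu)
    have hSfin : (⋃₀ (↑F : Set (Set 𝕊))).Finite :=
      Set.Finite.sUnion F.finite_toSet (fun t ht => hfin t ht)
    have hSne : (⋃₀ (↑F : Set (Set 𝕊))).Nonempty := by
      obtain ⟨A, hA⟩ := hFne
      obtain ⟨a, ha⟩ := hne A hA
      exact ⟨a, Set.mem_sUnion.2 ⟨A, hA, ha⟩⟩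
    obtain ⟨astar, hastarS, hmin⟩ := Set.exists_min_image _ (wlift r) hSfin hSne
    obtain ⟨A₀, hA₀F', hastar⟩ := Set.mem_sUnion.1 hastarS
    have hA₀F : A₀ ∈ F := hA₀F'
    set u₀ := wlift r astar with hu₀def
    have hgt : ∀ B ∈ F, B ≠ A₀ → ∀ b ∈ B, u₀ < wlift r b := by
      intro B hB hBne b hb
      exact lt_of_le_of_ne (hmin b (Set.mem_sUnion.2 ⟨B, hB, hb⟩))
        (hdisj A₀ hA₀F B hB (Ne.symm hBne) astar hastar b hb)
    have hu₀mem : u₀ ∈ Set.Ioo u v := hvals A₀ hA₀F astar hastar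
    have hA₀fin := hfin A₀ hA₀F
    set A₀f := hA₀fin.toFinset with hA₀fdef
    set T := A₀f.filter (fun x => u₀ < wlift r x) with hTdef
    have hcard1 : 1 ≤ A₀.ncard := (Set.ncard_pos hA₀fin).2 ⟨astar, hastar⟩
    rcases T.eq_empty_or_nonempty with hT | hTne
    · -- A₀ = {astar}
      have hsingle : A₀ = {astar} := by
        ext z
        constructor
        · intro hz
          have hzA₀f : z ∈ A₀f := hA₀fin.mem_toFinset.2 hz
          have hzT : z ∉ T := by rw [hT]; exact Finset.notMem_empty z
          have hnlt : ¬ u₀ < wlift r z := fun h => hzT (Finset.mem_filter.2 ⟨hzA₀f, h⟩)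
          have : wlift r z = u₀ :=
            le_antisymm (not_lt.1 hnlt) (hmin z (Set.mem_sUnion.2 ⟨A₀, hA₀F', hz⟩))
          exact Set.mem_singleton_iff.2 (wlift_inj this)
        · intro hz
          rw [Set.mem_singleton_iff] at hz
          exact hz ▸ hastar
      have hn1 : A₀.ncard = 1 := by rw [hsingle]; exact Set.ncard_singleton _
      set F' := F.erase A₀ with hF'def
      have hmemF : ∀ A ∈ F', A ∈ F := fun A hA => Finset.mem_of_mem_erase hA
      have hsum' : ∑ A ∈ F', A.ncard ≤ n := by
        have h : A₀.ncard + ∑ A ∈ F.erase A₀, A.ncard = ∑ A ∈ F, A.ncard :=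
          Finset.add_sum_erase F _ hA₀F
        rw [hF'def]
        omega
      have hbound := ih F' u₀ v hsum' hu₀mem.2
        (fun A hA => hfin A (hmemF A hA)) (fun A hA => hne A (hmemF A hA))
        (fun A hA a ha => ⟨hgt A (hmemF A hA) (Finset.ne_of_mem_erase hA) a ha,
          (hvals A (hmemF A hA) a ha).2⟩)
        (fun A hA => hlat A (hmemF A hA))
        (fun A hA B hB => hdisj A (hmemF A hA) B (hmemF B hB))
        (fun A hA B hB => hsep A (hmemF A hA) B (hmemF B hB))
      have hsumeq : ∑ A ∈ F, (A.ncard - 1) = ∑ A ∈ F', (A.ncard - 1) := by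
        have h : (A₀.ncard - 1) + ∑ A ∈ F.erase A₀, (A.ncard - 1) = ∑ A ∈ F, (A.ncard - 1) :=
          Finset.add_sum_erase F (fun A => A.ncard - 1) hA₀F
        rw [hF'def]
        omega
      rw [hsumeq]
      calc ((∑ A ∈ F', (A.ncard - 1) : ℕ) : ℝ) < d * (v - u₀) := hbound
        _ ≤ d * (v - u) := by nlinarith [hu₀mem.1]
    · -- main case
      obtain ⟨ac, hacT, hacmin⟩ := Finset.exists_min_image T (wlift r) hTne
      have hacA₀ : ac ∈ A₀ := hA₀fin.mem_toFinset.1 (Finset.mem_filter.1 hacT).1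
      set c := wlift r ac with hcdef
      have huc : u₀ < c := (Finset.mem_filter.1 hacT).2
      have hcv : c < v := (hvals A₀ hA₀F ac hacA₀).2
      have hdich : ∀ B ∈ F.erase A₀, (∃ b ∈ B, wlift r b < c) → ∀ b ∈ B, wlift r b < c := by
        rintro B hB ⟨b₁, hb₁, hb₁c⟩ b hb
        by_contra hnb
        have hBF : B ∈ F := Finset.mem_of_mem_erase hB
        have hBne : B ≠ A₀ := Finset.ne_of_mem_erase hB
        have hbne : wlift r b ≠ c :=
          hdisj B hBF A₀ hA₀F hBne b hb ac hacA₀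
        have hbc : c < wlift r b := lt_of_le_of_ne (not_lt.1 hnb) (Ne.symm hbne)
        exact hsep A₀ hA₀F B hBF (Ne.symm hBne) b₁ hb₁ b hb ac hacA₀ astar hastar
          hb₁c hbc (Or.inl (hgt B hBF hBne b₁ hb₁))
      set Fin := (F.erase A₀).filter (fun B => ∃ b ∈ B, wlift r b < c) with hFindef
      set Fout := (F.erase A₀).filter (fun B => ¬ ∃ b ∈ B, wlift r b < c) with hFoutdef
      have hFinF : ∀ B ∈ Fin, B ∈ F := fun B hB =>
        Finset.mem_of_mem_erase (Finset.mem_filter.1 hB).1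
      have hFoutF : ∀ B ∈ Fout, B ∈ F := fun B hB =>
        Finset.mem_of_mem_erase (Finset.mem_filter.1 hB).1
      have hFinvals : ∀ B ∈ Fin, ∀ b ∈ B, wlift r b ∈ Set.Ioo u₀ c := by
        intro B hB b hb
        refine ⟨hgt B (hFinF B hB) (Finset.ne_of_mem_erase (Finset.mem_filter.1 hB).1) b hb, ?_⟩
        exact hdich B (Finset.mem_filter.1 hB).1 (Finset.mem_filter.1 hB).2 b hb
      have hFoutvals : ∀ B ∈ Fout, ∀ b ∈ B, wlift r b ∈ Set.Ioo c v := by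
        intro B hB b hb
        have hBerase := (Finset.mem_filter.1 hB).1
        have hnot := (Finset.mem_filter.1 hB).2
        push_neg at hnot
        have h1 : c ≤ wlift r b := hnot b hb
        have h2 : wlift r b ≠ c :=
          hdisj B (hFoutF B hB) A₀ hA₀F (Finset.ne_of_mem_erase hBerase) b hb ac hacA₀
        exact ⟨lt_of_le_of_ne h1 (Ne.symm h2), (hvals B (hFoutF B hB) b hb).2⟩
      obtain ⟨m, hm⟩ := hlat A₀ hA₀F ac hacA₀ astar hastar
      have hmpos : (0:ℝ) < m := by rw [← hm]; nlinarith
      set A₀' : Set 𝕊 := A₀ \ {astar} with hA₀'def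
      have hacne : ac ≠ astar := by
        intro h
        have hcu : c = u₀ := by rw [hcdef, hu₀def, h]
        rw [hcu] at huc
        exact lt_irrefl _ huc
      have hacA₀' : ac ∈ A₀' := ⟨hacA₀, by simp [hacne]⟩
      have hA₀'fin : A₀'.Finite := by rw [hA₀'def]; exact hA₀fin.diff
      have h2card : 2 ≤ A₀.ncard := by
        have hsub : ({astar, ac} : Set 𝕊) ⊆ A₀ := by
          intro z hz; rcases hz with hz | hz
          · exact hz ▸ hastar
          · exact (Set.mem_singleton_iff.1 hz) ▸ hacA₀
        have := Set.ncard_le_ncard hsub hA₀fin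
        rwa [Set.ncard_pair (Ne.symm hacne)] at this
      have hA₀'card : A₀'.ncard = A₀.ncard - 1 :=
        Set.ncard_diff_singleton_of_mem hastar
      set u' := u + (c - u₀) with hu'def
      have hu'c : u' < c := by
        have := hu₀mem.1; simp only [hu'def]; linarith
      have hA₀'vals : ∀ a ∈ A₀', wlift r a ∈ Set.Ioo u' v := by
        rintro a ⟨haA₀, hane⟩
        simp only [Set.mem_singleton_iff] at hane
        have h1 : u₀ ≤ wlift r a := hmin a (Set.mem_sUnion.2 ⟨A₀, hA₀F', haA₀⟩)
        have h2 : wlift r a ≠ u₀ := fun h => hane (wlift_inj h)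
        have hT : a ∈ T := Finset.mem_filter.2 ⟨hA₀fin.mem_toFinset.2 haA₀,
          lt_of_le_of_ne h1 (Ne.symm h2)⟩
        have := hacmin a hT
        exact ⟨lt_of_lt_of_le hu'c this, (hvals A₀ hA₀F a haA₀).2⟩
      set F' := insert A₀' Fout with hF'def
      have hA₀'notin : A₀' ∉ Fout := by
        intro h
        exact hdisj A₀' (hFoutF _ h) A₀ hA₀F
          (Finset.ne_of_mem_erase (Finset.mem_filter.1 h).1) ac hacA₀' ac hacA₀ rfl
      have hA₀'ne : ∀ B ∈ Fout, A₀' ≠ B := by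
        intro B hB h; exact hA₀'notin (h ▸ hB)
      -- hypotheses for F'
      have hF'fin : ∀ A ∈ F', A.Finite := by
        intro A hA; rcases Finset.mem_insert.1 hA with rfl | hA
        · exact hA₀'fin
        · exact hfin A (hFoutF A hA)
      have hF'ne : ∀ A ∈ F', A.Nonempty := by
        intro A hA; rcases Finset.mem_insert.1 hA with rfl | hA
        · exact ⟨ac, hacA₀'⟩
        · exact hne A (hFoutF A hA)
      have hF'vals : ∀ A ∈ F', ∀ a ∈ A, wlift r a ∈ Set.Ioo u' v := by
        intro A hA a ha; rcases Finset.mem_insert.1 hA with rfl | hA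
        · exact hA₀'vals a ha
        · have := hFoutvals A hA a ha
          exact ⟨lt_trans hu'c this.1, this.2⟩
      have hF'lat : ∀ A ∈ F', ∀ a ∈ A, ∀ b ∈ A, ∃ m : ℤ, (wlift r a - wlift r b) * d = m := by
        intro A hA a ha b hb; rcases Finset.mem_insert.1 hA with rfl | hA
        · exact hlat A₀ hA₀F a ha.1 b hb.1
        · exact hlat A (hFoutF A hA) a ha b hb
      have hF'disj : ∀ A ∈ F', ∀ B ∈ F', A ≠ B → ∀ a ∈ A, ∀ b ∈ B,
          wlift r a ≠ wlift r b := by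
        intro A hA B hB hAB a ha b hb
        rcases Finset.mem_insert.1 hA with rfl | hA <;> rcases Finset.mem_insert.1 hB with rfl | hB
        · exact absurd rfl hAB
        · exact hdisj A₀ hA₀F B (hFoutF B hB)
            (Ne.symm (Finset.ne_of_mem_erase (Finset.mem_filter.1 hB).1)) a ha.1 b hb
        · exact hdisj A (hFoutF A hA) A₀ hA₀F
            (Finset.ne_of_mem_erase (Finset.mem_filter.1 hA).1) a ha b hb.1
        · exact hdisj A (hFoutF A hA) B (hFoutF B hB) hAB a ha b hb
      have hF'sep : ∀ A ∈ F', ∀ B ∈ F', A ≠ B → ∀ b₁ ∈ B, ∀ b₂ ∈ B, ∀ a₁ ∈ A, ∀ a₂ ∈ A,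
          wlift r b₁ < wlift r a₁ → wlift r a₁ < wlift r b₂ →
          (wlift r a₂ < wlift r b₁ ∨ wlift r b₂ < wlift r a₂) → False := by
        intro A hA B hB hAB b₁ hb₁ b₂ hb₂ a₁ ha₁ a₂ ha₂
        rcases Finset.mem_insert.1 hA with rfl | hA <;> rcases Finset.mem_insert.1 hB with rfl | hB
        · exact absurd rfl hAB
        · exact hsep A₀ hA₀F B (hFoutF B hB)
            (Ne.symm (Finset.ne_of_mem_erase (Finset.mem_filter.1 hB).1)) b₁ hb₁ b₂ hb₂
            a₁ ha₁.1 a₂ ha₂.1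
        · exact hsep A (hFoutF A hA) A₀ hA₀F
            (Finset.ne_of_mem_erase (Finset.mem_filter.1 hA).1) b₁ hb₁.1 b₂ hb₂.1 a₁ ha₁ a₂ ha₂
        · exact hsep A (hFoutF A hA) B (hFoutF B hB) hAB b₁ hb₁ b₂ hb₂ a₁ ha₁ a₂ ha₂
      -- sums
      have hsum_erase : A₀.ncard + ∑ B ∈ F.erase A₀, B.ncard = ∑ B ∈ F, B.ncard :=
        Finset.add_sum_erase F (fun A => Set.ncard A) hA₀F
      have hsum_split : ∑ B ∈ Fin, B.ncard + ∑ B ∈ Fout, B.ncard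
          = ∑ B ∈ F.erase A₀, B.ncard :=
        Finset.sum_filter_add_sum_filter_not _ _ _
      have hsumFin : ∑ B ∈ Fin, B.ncard ≤ n := by omega
      have hsumF' : ∑ B ∈ F', B.ncard ≤ n := by
        rw [hF'def, Finset.sum_insert hA₀'notin, hA₀'card]
        omega
      have hIH1 := ih Fin u₀ c hsumFin huc
        (fun A hA => hfin A (hFinF A hA)) (fun A hA => hne A (hFinF A hA)) hFinvals
        (fun A hA => hlat A (hFinF A hA))
        (fun A hA B hB => hdisj A (hFinF A hA) B (hFinF B hB))
        (fun A hA B hB => hsep A (hFinF A hA) B (hFinF B hB))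
      have hu'v : u' < v := lt_trans hu'c hcv
      have hIH2 := ih F' u' v hsumF' hu'v hF'fin hF'ne hF'vals hF'lat hF'disj hF'sep
      -- turn hIH1 into an integer bound
      set sIn := ∑ B ∈ Fin, (B.ncard - 1) with hsIndef
      set sOut := ∑ B ∈ Fout, (B.ncard - 1) with hsOutdef
      have hIn_lt : (sIn : ℝ) < (m : ℝ) := by
        rw [← hm]
        calc (sIn : ℝ) < d * (c - u₀) := hIH1
          _ = (c - u₀) * d := by ring
      have hInz : (sIn : ℤ) < m := by exact_mod_cast hIn_lt
      have hIn_le : (sIn : ℝ) ≤ (m : ℝ) - 1 := by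
        have : (sIn : ℤ) ≤ m - 1 := by omega
        have := (Int.cast_le (R := ℝ)).2 this
        push_cast at this ⊢
        linarith
      -- decompose target sum
      have htgt : ∑ A ∈ F, (A.ncard - 1) = (A₀.ncard - 1) + (sIn + sOut) := by
        have h1 : (A₀.ncard - 1) + ∑ B ∈ F.erase A₀, (B.ncard - 1)
            = ∑ B ∈ F, (B.ncard - 1) :=
          Finset.add_sum_erase F (fun A => Set.ncard A - 1) hA₀F
        have h2 : sIn + sOut = ∑ B ∈ F.erase A₀, (B.ncard - 1) :=
          Finset.sum_filter_add_sum_filter_not _ _ _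
        omega
      have hF'sum : ∑ A ∈ F', (A.ncard - 1) = (A₀.ncard - 2) + sOut := by
        rw [hF'def, Finset.sum_insert hA₀'notin, hA₀'card]
        omega
      rw [hF'sum] at hIH2
      have hnat : ∑ A ∈ F, (A.ncard - 1) = ((A₀.ncard - 2) + sOut) + sIn + 1 := by omega
      rw [hnat]
      push_cast
      have hdu' : d * (v - u') = d * (v - u) - (m : ℝ) := by
        rw [← hm, hu'def]; ring
      rw [hdu'] at hIH2
      push_cast at hIH2
      linarith

end Counting


section Separation

/-- The separation lemma: if `s = ↑ρ` and `s' = ↑(ρ + j/d)` avoid the union of a degree-`d`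
critical portrait, then some portrait set has points (strictly) on both sides. -/
lemma portrait_sep {d : ℕ} (hd : 2 ≤ d) (P : CriticalPortrait d) (ρ : ℝ) (j : ℕ)
    (hj1 : 1 ≤ j) (hjd : j < d)
    (hs : ((ρ : ℝ) : 𝕊) ∉ P.union) (hs' : ((ρ + (j : ℝ) / d : ℝ) : 𝕊) ∉ P.union) :
    ∃ A ∈ P.sets, (∃ a ∈ A, wlift ρ a ∈ Set.Ioo ρ (ρ + (j : ℝ) / d)) ∧
      (∃ a' ∈ A, wlift ρ a' ∈ Set.Ioo (ρ + (j : ℝ) / d) (ρ + 1)) := by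
  classical
  by_contra hcon
  push_neg at hcon
  have hd0 : 0 < d := by omega
  have hdR : (0 : ℝ) < d := by exact_mod_cast hd0
  have hjdR : (0 : ℝ) < (j : ℝ) / d := by
    apply div_pos _ hdR; exact_mod_cast hj1
  have hjd1 : (j : ℝ) / d < 1 := by
    rw [div_lt_one hdR]; exact_mod_cast hjd
  have hmem : ∀ A ∈ P.sets, ∀ a ∈ A,
      wlift ρ a ∈ Set.Ioo ρ (ρ + (j : ℝ) / d) ∨
        wlift ρ a ∈ Set.Ioo (ρ + (j : ℝ) / d) (ρ + 1) := by
    intro A hA a ha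
    have haU : a ∈ P.union := Set.mem_sUnion.2 ⟨A, hA, ha⟩
    have hm := wlift_mem ρ a
    have h1 : wlift ρ a ≠ ρ := by
      intro h
      apply hs
      rw [← h, coe_wlift]
      exact haU
    have h2 : wlift ρ a ≠ ρ + (j : ℝ) / d := by
      intro h
      apply hs'
      rw [← h, coe_wlift]
      exact haU
    rcases lt_trichotomy (wlift ρ a) (ρ + (j : ℝ) / d) with h | h | h
    · exact Or.inl ⟨lt_of_le_of_ne hm.1 (Ne.symm h1), h⟩
    · exact absurd h h2
    · exact Or.inr ⟨h, hm.2⟩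
  set F₁ := P.sets.filter (fun A => ∀ a ∈ A, wlift ρ a < ρ + (j : ℝ) / d) with hF₁def
  set F₂ := P.sets.filter (fun A => ¬ ∀ a ∈ A, wlift ρ a < ρ + (j : ℝ) / d) with hF₂def
  have hF₁P : ∀ A ∈ F₁, A ∈ P.sets := fun A hA => (Finset.mem_filter.1 hA).1
  have hF₂P : ∀ A ∈ F₂, A ∈ P.sets := fun A hA => (Finset.mem_filter.1 hA).1
  have hF₁vals : ∀ A ∈ F₁, ∀ a ∈ A, wlift ρ a ∈ Set.Ioo ρ (ρ + (j : ℝ) / d) := by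
    intro A hA a ha
    rcases hmem A (hF₁P A hA) a ha with h | h
    · exact h
    · exact absurd ((Finset.mem_filter.1 hA).2 a ha) (not_lt.2 h.1.le)
  have hF₂vals : ∀ A ∈ F₂, ∀ a ∈ A, wlift ρ a ∈ Set.Ioo (ρ + (j : ℝ) / d) (ρ + 1) := by
    intro A hA a ha
    have hnall := (Finset.mem_filter.1 hA).2
    push_neg at hnall
    obtain ⟨a₀, ha₀, ha₀ge⟩ := hnall
    have ha₀mem : wlift ρ a₀ ∈ Set.Ioo (ρ + (j : ℝ) / d) (ρ + 1) := by
      rcases hmem A (hF₂P A hA) a₀ ha₀ with h | h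
      · exact absurd h.2 (not_lt.2 ha₀ge)
      · exact h
    rcases hmem A (hF₂P A hA) a ha with h | h
    · exact absurd ha₀mem (hcon A (hF₂P A hA) ⟨a, ha, h⟩ a₀ ha₀)
    · exact h
  -- common hypotheses for `lin_count`
  have hlat : ∀ A ∈ P.sets, ∀ a ∈ A, ∀ b ∈ A,
      ∃ m : ℤ, (wlift ρ a - wlift ρ b) * d = m := by
    intro A hA a ha b hb
    obtain ⟨w, hw⟩ := Set.ncard_eq_one.1 (P.image_ncard A hA)
    have hima : md d a = w := by
      have : md d a ∈ md d '' A := ⟨a, ha, rfl⟩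
      rwa [hw, Set.mem_singleton_iff] at this
    have himb : md d b = w := by
      have : md d b ∈ md d '' A := ⟨b, hb, rfl⟩
      rwa [hw, Set.mem_singleton_iff] at this
    have heq : d • a = d • b := by
      show md d a = md d b
      rw [hima, himb]
    have hca : ((d * wlift ρ a : ℝ) : 𝕊) = d • a := by
      rw [← nsmul_eq_mul, AddCircle.coe_nsmul, coe_wlift]
    have hcb : ((d * wlift ρ b : ℝ) : 𝕊) = d • b := by
      rw [← nsmul_eq_mul, AddCircle.coe_nsmul, coe_wlift]
    have h0 : ((d * wlift ρ a - d * wlift ρ b : ℝ) : 𝕊) = 0 := by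
      rw [AddCircle.coe_sub, hca, hcb, heq, sub_self]
    obtain ⟨z, hz⟩ := (AddCircle.coe_eq_zero_iff (1:ℝ)).1 h0
    rw [zsmul_eq_mul, mul_one] at hz
    exact ⟨z, by rw [hz]; ring⟩
  have hdisjP : ∀ A ∈ P.sets, ∀ B ∈ P.sets, A ≠ B → ∀ a ∈ A, ∀ b ∈ B,
      wlift ρ a ≠ wlift ρ b := by
    intro A hA B hB hAB a ha b hb heq
    obtain ⟨x, hx⟩ := P.pairwise_unlinked A hA B hB hAB
    have haB : a ∉ B := fun h => (connectedComponentIn_subset _ _ (hx ha)) h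
    exact haB ((wlift_inj heq) ▸ hb)
  have hsepP : ∀ A ∈ P.sets, ∀ B ∈ P.sets, A ≠ B → ∀ b₁ ∈ B, ∀ b₂ ∈ B, ∀ a₁ ∈ A, ∀ a₂ ∈ A,
      wlift ρ b₁ < wlift ρ a₁ → wlift ρ a₁ < wlift ρ b₂ →
      (wlift ρ a₂ < wlift ρ b₁ ∨ wlift ρ b₂ < wlift ρ a₂) → False := by
    intro A hA B hB hAB b₁ hb₁ b₂ hb₂ a₁ ha₁ a₂ ha₂ h1 h2 h3
    exact sep_of_unlinked ρ (P.pairwise_unlinked A hA B hB hAB) hb₁ hb₂ ha₁ ha₂ h1 h2 h3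
  have hnonempty : ∀ A ∈ P.sets, A.Nonempty := fun A hA =>
    (Set.ncard_pos (P.finite A hA)).1 (by have := P.two_le A hA; omega)
  -- apply the counting lemma on both sides
  have hb₁ := lin_count d hd0 ρ (∑ A ∈ F₁, A.ncard) F₁ ρ (ρ + (j : ℝ) / d) le_rfl
    (by linarith) (fun A hA => P.finite A (hF₁P A hA)) (fun A hA => hnonempty A (hF₁P A hA))
    hF₁vals (fun A hA => hlat A (hF₁P A hA))
    (fun A hA B hB => hdisjP A (hF₁P A hA) B (hF₁P B hB))
    (fun A hA B hB => hsepP A (hF₁P A hA) B (hF₁P B hB))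
  have hb₂ := lin_count d hd0 ρ (∑ A ∈ F₂, A.ncard) F₂ (ρ + (j : ℝ) / d) (ρ + 1) le_rfl
    (by linarith) (fun A hA => P.finite A (hF₂P A hA)) (fun A hA => hnonempty A (hF₂P A hA))
    hF₂vals (fun A hA => hlat A (hF₂P A hA))
    (fun A hA B hB => hdisjP A (hF₂P A hA) B (hF₂P B hB))
    (fun A hA B hB => hsepP A (hF₂P A hA) B (hF₂P B hB))
  have he₁ : (d : ℝ) * ((ρ + (j : ℝ) / d) - ρ) = j := by field_simp; ring
  have he₂ : (d : ℝ) * ((ρ + 1) - (ρ + (j : ℝ) / d)) = ((d - j : ℕ) : ℝ) := by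
    have : ((d - j : ℕ) : ℝ) = (d : ℝ) - j := by
      push_cast [Nat.cast_sub hjd.le]; ring
    rw [this]; field_simp; ring
  rw [he₁] at hb₁
  rw [he₂] at hb₂
  have hn₁ : ∑ A ∈ F₁, (A.ncard - 1) < j := by exact_mod_cast hb₁
  have hn₂ : ∑ A ∈ F₂, (A.ncard - 1) < d - j := by exact_mod_cast hb₂
  have hsplit : ∑ A ∈ F₁, (A.ncard - 1) + ∑ A ∈ F₂, (A.ncard - 1)
      = ∑ A ∈ P.sets, (A.ncard - 1) :=
    Finset.sum_filter_add_sum_filter_not _ _ _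
  have htot := P.sum_card
  omega

end Separation

/-- If every argument of a critical portrait `Θ` is rational and strictly pre-periodic
under `m_d`, then `Θ` has aperiodic kneading: no participating argument has a periodic
one-sided itinerary. -/
theorem aperiodic_kneading_of_preperiodic (d : ℕ) (hd : 2 ≤ d) (P : CriticalPortrait d)
    (hpre : ∀ θ ∈ P.union, IsRatC θ ∧
      (∀ q : ℕ, 0 < q → (md d)^[q] θ ≠ θ) ∧
      (∃ k q : ℕ, 0 < k ∧ 0 < q ∧ (md d)^[k + q] θ = (md d)^[k] θ)) :
    ∀ θ ∈ P.union, ∀ L : ℕ → Set 𝕊, HasItin d P θ L →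
      ¬ ∃ q : ℕ, 0 < q ∧ ∀ n, L (n + q) = L n := by
  intro θ hθ L hItin hper
  obtain ⟨q, hq, hLq⟩ := hper
  obtain ⟨-, hnp, k, p, hk, hp, hcyc⟩ := hpre θ hθ
  have hd0 : 0 < d := by omega
  have hdR : (0 : ℝ) < d := by exact_mod_cast hd0
  set x : ℕ → 𝕊 := fun n => (md d)^[n] θ with hxdef
  have hxsucc : ∀ n, x (n + 1) = md d (x n) := by
    intro n
    show (md d)^[n + 1] θ = md d ((md d)^[n] θ)
    rw [Function.iterate_succ_apply']
  have hshift : ∀ t n, x (n + t) = (md d)^[t] (x n) := by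
    intro t n
    show (md d)^[n + t] θ = (md d)^[t] ((md d)^[n] θ)
    rw [Nat.add_comm, Function.iterate_add_apply]
  have hcyc' : x (k + p) = x k := hcyc
  have hperiodic : ∀ n, k ≤ n → x (n + p) = x n := by
    intro n hn
    obtain ⟨t, rfl⟩ := Nat.exists_eq_add_of_le hn
    have e : k + t + p = (k + p) + t := by omega
    rw [e, hshift t (k + p), hcyc', ← hshift t k]
  have hmulp : ∀ m n, k ≤ n → x (n + m * p) = x n := by
    intro m
    induction m with
    | zero => intro n _; simp
    | succ i ihm =>
      intro n hn
      have e : n + (i + 1) * p = (n + i * p) + p := by ring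
      rw [e, hperiodic _ (le_trans hn (Nat.le_add_right _ _)), ihm n hn]
  set N := q * k * p with hNdef
  have hNpos : 0 < N := by positivity
  have hkN : k ≤ N := by
    calc k = 1 * k * 1 := by ring
      _ ≤ q * k * p := by
          apply Nat.mul_le_mul (Nat.mul_le_mul (by omega) le_rfl) (by omega)
  have hxN : ∀ n, k ≤ n → x (n + N) = x n := by
    intro n hn
    have e : N = (q * k) * p := by rw [hNdef]; try ring
    rw [e]
    exact hmulp (q * k) n hn
  have hLN : ∀ n, L (n + N) = L n := by
    have hmq : ∀ m n, L (n + m * q) = L n := by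
      intro m
      induction m with
      | zero => intro n; simp
      | succ i ihm =>
        intro n
        have e : n + (i + 1) * q = (n + i * q) + q := by ring
        rw [e, hLq, ihm]
    intro n
    have e : N = (k * p) * q := by rw [hNdef]; try ring
    rw [e]
    exact hmq (k * p) n
  have hx0N : x N ≠ x 0 := by
    have := hnp N hNpos
    simpa [hxdef] using this
  have hfind : ∃ n₀, x (n₀ + N) ≠ x n₀ ∧ x ((n₀ + 1) + N) = x (n₀ + 1) := by
    have hxk : x (k + N) = x k := hxN k le_rfl
    have key : ∀ i, x (i + N) = x i →
        ∃ n₀, x (n₀ + N) ≠ x n₀ ∧ x ((n₀ + 1) + N) = x (n₀ + 1) := by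
      intro i
      induction i with
      | zero => intro h; exact absurd h (by simpa using hx0N)
      | succ i ihm =>
        intro h
        by_cases hi : x (i + N) = x i
        · exact ihm hi
        · exact ⟨i, hi, h⟩
    exact key k hxk
  obtain ⟨n₀, hXY, hnext⟩ := hfind
  set X := x n₀ with hXdef
  set Y := x (n₀ + N) with hYdef
  have hmdXY : md d Y = md d X := by
    have h1 : md d Y = x (n₀ + N + 1) := (hxsucc (n₀ + N)).symm
    have h2 : md d X = x (n₀ + 1) := (hxsucc n₀).symm
    have e : n₀ + N + 1 = (n₀ + 1) + N := by omega
    rw [h1, h2, e]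
    exact hnext
  have hsub0 : d • (Y - X) = (0 : 𝕊) := by
    have : d • Y = d • X := hmdXY
    rw [smul_sub, this, sub_self]
  set w := wlift 0 (Y - X) with hwdef
  have hwmem : w ∈ Set.Ico (0 : ℝ) (0 + 1) := wlift_mem 0 _
  have hwcoe : ((w : ℝ) : 𝕊) = Y - X := coe_wlift 0 _
  have hcoe0 : ((d * w : ℝ) : 𝕊) = 0 := by
    have h1 : ((d • w : ℝ) : 𝕊) = d • ((w : ℝ) : 𝕊) := AddCircle.coe_nsmul 1
    rw [nsmul_eq_mul] at h1
    rw [h1, hwcoe, hsub0]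
  obtain ⟨z, hz⟩ := (AddCircle.coe_eq_zero_iff (1 : ℝ)).1 hcoe0
  rw [zsmul_eq_mul, mul_one] at hz
  have hwne : w ≠ 0 := by
    intro h
    apply hXY
    have h2 : Y - X = 0 := by
      rw [← hwcoe, h]
      exact QuotientAddGroup.mk_zero _
    exact sub_eq_zero.1 h2
  have hwpos : 0 < w := lt_of_le_of_ne hwmem.1 (Ne.symm hwne)
  have hzpos : 0 < z := by
    have : (0 : ℝ) < z := by rw [hz]; positivity
    exact_mod_cast this
  have hzd : z < d := by
    have : (z : ℝ) < d := by
      rw [hz]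
      nlinarith [hwmem.2]
    exact_mod_cast this
  set j := z.toNat with hjdef
  have hj1 : 1 ≤ j := by omega
  have hjd : j < d := by omega
  have hjcast : ((j : ℕ) : ℝ) = (z : ℝ) := by
    have : ((j : ℕ) : ℤ) = z := Int.toNat_of_nonneg hzpos.le
    exact_mod_cast this
  have hjw : w = (j : ℝ) / d := by
    rw [hjcast, hz]
    field_simp
  have hYX : Y = X + (((j : ℝ) / d : ℝ) : 𝕊) := by
    have h2 : (((j : ℝ) / d : ℝ) : 𝕊) = Y - X := by rw [← hjw, hwcoe]
    rw [h2, add_comm, sub_add_cancel]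
  have hjdR : (0 : ℝ) < (j : ℝ) / d := by positivity
  have hjd1 : (j : ℝ) / d < 1 := by
    rw [div_lt_one hdR]; exact_mod_cast hjd
  -- the unlinked class at time n₀
  have hcls : P.IsUnlinkedClass (L n₀) := by
    rcases hItin with h | h
    · exact (h n₀).1
    · exact (h n₀).1
  obtain ⟨t, htU, htL⟩ := hcls
  -- produce a pair of points of L n₀ at distance exactly j/d
  have hkey : ∃ ρ : ℝ, ((ρ : ℝ) : 𝕊) ∈ L n₀ ∧ ((ρ + (j : ℝ) / d : ℝ) : 𝕊) ∈ L n₀ := by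
    obtain ⟨xl, hxl⟩ : ∃ r : ℝ, ((r : ℝ) : 𝕊) = X := ⟨wlift 0 X, coe_wlift 0 X⟩
    have hxlY : ((xl + (j : ℝ) / d : ℝ) : 𝕊) = Y := by
      rw [AddCircle.coe_add, hxl, ← hYX]
    rcases hItin with hR | hLf
    · obtain ⟨ε₁, hε₁, hseg₁⟩ := (hR n₀).2
      obtain ⟨ε₂, hε₂, hseg₂⟩ := (hR (n₀ + N)).2
      set ε := min ε₁ ε₂ with hεdef
      have hε : 0 < ε := lt_min hε₁ hε₂
      refine ⟨xl + ε / 2, ?_, ?_⟩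
      · apply hseg₁
        exact ⟨xl, hxl, xl + ε / 2,
          ⟨by linarith, by have := min_le_left ε₁ ε₂; linarith⟩, rfl⟩
      · have hmem2 : ((xl + ε / 2 + (j : ℝ) / d : ℝ) : 𝕊)
            ∈ rightSegment ((md d)^[n₀ + N] θ) ε₂ := by
          refine ⟨xl + (j : ℝ) / d, hxlY, xl + ε / 2 + (j : ℝ) / d,
            ⟨by linarith, ?_⟩, rfl⟩
          have := min_le_right ε₁ ε₂
          linarith
        have := hseg₂ hmem2
        rwa [hLN n₀] at this
    · obtain ⟨ε₁, hε₁, hseg₁⟩ := (hLf n₀).2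
      obtain ⟨ε₂, hε₂, hseg₂⟩ := (hLf (n₀ + N)).2
      set ε := min ε₁ ε₂ with hεdef
      have hε : 0 < ε := lt_min hε₁ hε₂
      refine ⟨xl - ε / 2, ?_, ?_⟩
      · apply hseg₁
        refine ⟨xl, hxl, xl - ε / 2, ⟨?_, by linarith⟩, rfl⟩
        have := min_le_left ε₁ ε₂
        linarith
      · have hmem2 : ((xl - ε / 2 + (j : ℝ) / d : ℝ) : 𝕊)
            ∈ leftSegment ((md d)^[n₀ + N] θ) ε₂ := by
          refine ⟨xl + (j : ℝ) / d, hxlY, xl - ε / 2 + (j : ℝ) / d,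
            ⟨?_, by linarith⟩, rfl⟩
          have := min_le_right ε₁ ε₂
          linarith
        have := hseg₂ hmem2
        rwa [hLN n₀] at this
  obtain ⟨ρ, hsL, hs'L⟩ := hkey
  rw [htL, Set.mem_setOf_eq] at hsL hs'L
  have hsU : ((ρ : ℝ) : 𝕊) ∉ P.union := hsL.2.1
  have hs'U : ((ρ + (j : ℝ) / d : ℝ) : 𝕊) ∉ P.union := hs'L.2.1
  obtain ⟨A, hA, ⟨a, haA, hain⟩, a', ha'A, ha'in⟩ :=
    portrait_sep hd P ρ j hj1 hjd hsU hs'U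
  have hUts : Unlinked A {t, ((ρ : ℝ) : 𝕊)} := (hsL.2.2 A hA).2
  have hUts' : Unlinked A {t, ((ρ + (j : ℝ) / d : ℝ) : 𝕊)} := (hs'L.2.2 A hA).2
  set τ := wlift ρ t with hτdef
  set α := wlift ρ a with hαdef
  set α' := wlift ρ a' with hα'def
  have hτcoe : ((τ : ℝ) : 𝕊) = t := coe_wlift ρ t
  have hαcoe : ((α : ℝ) : 𝕊) = a := coe_wlift ρ a
  have hα'coe : ((α' : ℝ) : 𝕊) = a' := coe_wlift ρ a'
  have haA' : ((α : ℝ) : 𝕊) ∈ A := by rw [hαcoe]; exact haA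
  have ha'A' : ((α' : ℝ) : 𝕊) ∈ A := by rw [hα'coe]; exact ha'A
  have hτmem : τ ∈ Set.Ico ρ (ρ + 1) := wlift_mem ρ t
  have haU : a ∈ P.union := Set.mem_sUnion.2 ⟨A, hA, haA⟩
  have ha'U : a' ∈ P.union := Set.mem_sUnion.2 ⟨A, hA, ha'A⟩
  have hτα : τ ≠ α := by
    intro h
    apply htU
    have : t = a := by rw [← hτcoe, ← hαcoe, h]
    rw [this]
    exact haU
  have hτα' : τ ≠ α' := by
    intro h
    apply htU
    have : t = a' := by rw [← hτcoe, ← hα'coe, h]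
    rw [this]
    exact ha'U
  -- case analysis on the position of τ
  rcases eq_or_lt_of_le hτmem.1 with hτ1 | hτ1
  · -- t = ↑ρ; use the pair {t, s'} = {↑ρ, ↑(ρ + j/d)}
    have hU : Unlinked A {((ρ : ℝ) : 𝕊), ((ρ + (j : ℝ) / d : ℝ) : 𝕊)} := by
      rw [← hτcoe, ← hτ1] at hUts'
      exact hUts'
    exact unlinked_contra (by linarith) (by linarith) hain ha'in haA' ha'A' hU
  · rcases lt_trichotomy τ (ρ + (j : ℝ) / d) with hτ2 | hτ2 | hτ2
    · -- τ strictly inside (ρ, ρ + j/d)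
      rcases lt_trichotomy α τ with hατ | hατ | hατ
      · -- use pair {s, t} = {↑ρ, ↑τ}
        have hU : Unlinked A {((ρ : ℝ) : 𝕊), ((τ : ℝ) : 𝕊)} := by
          rw [← hτcoe, Set.pair_comm] at hUts
          exact hUts
        exact unlinked_contra hτ1 (by linarith) ⟨hain.1, hατ⟩
          ⟨by linarith [ha'in.1], ha'in.2⟩ haA' ha'A' hU
      · exact absurd hατ.symm hτα
      · -- use pair {t, s'} = {↑τ, ↑(ρ + j/d)}
        have hU : Unlinked A {((τ : ℝ) : 𝕊), ((ρ + (j : ℝ) / d : ℝ) : 𝕊)} := by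
          rw [← hτcoe] at hUts'
          exact hUts'
        exact unlinked_contra hτ2 (by linarith) ⟨hατ, hain.2⟩
          ⟨ha'in.1, by linarith [ha'in.2]⟩ haA' ha'A' hU
    · -- t = ↑(ρ + j/d); use the pair {t, s} = {↑ρ, ↑(ρ + j/d)}
      have hU : Unlinked A {((ρ : ℝ) : 𝕊), ((ρ + (j : ℝ) / d : ℝ) : 𝕊)} := by
        rw [← hτcoe, hτ2, Set.pair_comm] at hUts
        exact hUts
      exact unlinked_contra (by linarith) (by linarith) hain ha'in haA' ha'A' hU
    · -- τ strictly inside (ρ + j/d, ρ + 1)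
      rcases lt_trichotomy α' τ with hα'τ | hα'τ | hα'τ
      · -- use pair {s', t} = {↑(ρ + j/d), ↑τ}, with a lifted as α + 1
        have hU : Unlinked A {((ρ + (j : ℝ) / d : ℝ) : 𝕊), ((τ : ℝ) : 𝕊)} := by
          rw [← hτcoe, Set.pair_comm] at hUts'
          exact hUts'
        have hacoe1 : ((α + 1 : ℝ) : 𝕊) ∈ A := by
          rw [coe_add_one, hαcoe]
          exact haA
        refine unlinked_contra hτ2 ?_ ⟨ha'in.1, hα'τ⟩
          ⟨?_, ?_⟩ ha'A' hacoe1 hU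
        · linarith [hτmem.2]
        · linarith [hain.1, hτmem.2]
        · linarith [hain.2]
      · exact absurd hα'τ.symm hτα'
      · -- use pair {t, s} = {↑τ, ↑(ρ + 1)}, with a lifted as α + 1
        have hcoe0 : ((ρ + 1 : ℝ) : 𝕊) = ((ρ : ℝ) : 𝕊) := coe_add_one ρ
        have hU : Unlinked A {((τ : ℝ) : 𝕊), ((ρ + 1 : ℝ) : 𝕊)} := by
          rw [← hτcoe] at hUts
          rw [hcoe0]
          exact hUts
        have hacoe1 : ((α + 1 : ℝ) : 𝕊) ∈ A := by
          rw [coe_add_one, hαcoe]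
          exact haA
        refine unlinked_contra ?_ ?_ ⟨hα'τ, ?_⟩ ⟨?_, ?_⟩ ha'A' hacoe1 hU
        · exact lt_trans hα'τ (wlift_mem ρ a').2
        · linarith
        · exact (wlift_mem ρ a').2
        · linarith [hain.1]
        · linarith [hain.2, hτ2]
end
end
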